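/- arXiv:2302.02475 — 6 statements merged into one kernel-verified Lean document; each statement's English description precedes it below -/
import Mathlib

section
/- Let f be a non-negative measurable function on a measurable set E ⊂ ℝ^n of finite measure, and let φ be a non-negative, strictly decreasing continuous function on an interval containing the range f(E). Then for ψ := φ ∘ f, the equality ψ^*(t) = φ(f^*(|E| - t)) holds for almost all t ∈ (0, |E|). -/
open MeasureTheory Set

/-- Non-increasing rearrangement of `g` restricted to `E`. -/
noncomputable def rearrOn {α : Type*} [MeasureSpace α] (E : Set α) (g : α → ℝ) (t : ℝ) : ℝ :=
  sInf {a : ℝ | 0 < a ∧ volume {x ∈ E | a < |g x|} ≤ ENNReal.ofReal t}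

section Aux

variable {α : Type*} [MeasureSpace α] {E : Set α} {g : α → ℝ}

lemma rearr_bddBelow (E : Set α) (g : α → ℝ) (t : ℝ) :
    BddBelow {a : ℝ | 0 < a ∧ volume {x ∈ E | a < |g x|} ≤ ENNReal.ofReal t} :=
  ⟨0, fun _ ha => ha.1.le⟩

lemma rearr_nonneg (E : Set α) (g : α → ℝ) (t : ℝ) : 0 ≤ rearrOn E g t :=
  Real.sInf_nonneg fun _ ha => ha.1.le

/-- The defining set is nonempty for `s > 0`. -/
lemma rearr_set_nonempty (hEfin : volume E < ⊤)
    (hmeas : ∀ b : ℝ, 0 < b → MeasurableSet {x ∈ E | b < |g x|}) {s : ℝ} (hs : 0 < s) :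
    {a : ℝ | 0 < a ∧ volume {x ∈ E | a < |g x|} ≤ ENNReal.ofReal s}.Nonempty := by
  set T : ℕ → Set α := fun n => {x ∈ E | (n : ℝ) + 1 < |g x|} with hT
  have hmono : Antitone T := by
    intro m n hmn x hx
    refine ⟨hx.1, lt_of_le_of_lt ?_ hx.2⟩
    have : (m : ℝ) ≤ (n : ℝ) := Nat.cast_le.2 hmn
    linarith
  have hint : ⋂ n, T n = ∅ := by
    ext x
    simp only [mem_iInter, mem_empty_iff_false, iff_false, not_forall]
    obtain ⟨n, hn⟩ := exists_nat_gt (|g x|)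
    exact ⟨n, fun hx => absurd hx.2 (by push_neg; linarith)⟩
  have htend := tendsto_measure_iInter_atTop (μ := volume)
    (fun n => ((hmeas _ (by positivity)).nullMeasurableSet))
    hmono ⟨0, ((measure_mono (fun x hx => hx.1)).trans_lt hEfin).ne⟩
  rw [hint, measure_empty] at htend
  obtain ⟨n, hn⟩ := (htend.eventually_lt_const (ENNReal.ofReal_pos.2 hs)).exists
  exact ⟨(n : ℝ) + 1, by positivity, hn.le⟩

/-- Below the infimum, the distribution is large. -/
lemma measure_gt_of_lt_rearr {s a' : ℝ} (h0 : 0 < a') (h1 : a' < rearrOn E g s) :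
    ENNReal.ofReal s < volume {x ∈ E | a' < |g x|} := by
  by_contra h
  push_neg at h
  exact absurd (csInf_le (rearr_bddBelow E g s) ⟨h0, h⟩) (not_le.2 h1)

/-- The infimum itself satisfies the measure bound (right continuity). -/
lemma measure_rearr_le (hEfin : volume E < ⊤)
    (hmeas : ∀ b : ℝ, 0 < b → MeasurableSet {x ∈ E | b < |g x|}) {s : ℝ} (hs : 0 < s) :
    volume {x ∈ E | rearrOn E g s < |g x|} ≤ ENNReal.ofReal s := by
  obtain ⟨u, hu_anti, hu_tend, hu_mem⟩ := exists_seq_tendsto_sInf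
    (rearr_set_nonempty hEfin hmeas hs) (rearr_bddBelow E g s)
  have hUnion : {x ∈ E | rearrOn E g s < |g x|} = ⋃ n, {x ∈ E | u n < |g x|} := by
    ext x
    simp only [mem_setOf_eq, mem_iUnion]
    constructor
    · rintro ⟨hxE, hx⟩
      obtain ⟨n, hn⟩ := (hu_tend.eventually_lt_const hx).exists
      exact ⟨n, hxE, hn⟩
    · rintro ⟨n, hxE, hx⟩
      exact ⟨hxE, lt_of_le_of_lt (csInf_le (rearr_bddBelow E g s) (hu_mem n)) hx⟩
  rw [hUnion]
  have hmonoT : Monotone fun n => {x ∈ E | u n < |g x|} := by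
    intro m n hmn x hx
    exact ⟨hx.1, lt_of_le_of_lt (hu_anti hmn) hx.2⟩
  exact le_of_tendsto' (tendsto_measure_iUnion_atTop (μ := volume) hmonoT)
    fun n => (hu_mem n).2

/-- The rearrangement value lies in any order-connected set containing the range. -/
lemma rearr_mem_of_ordConnected (hE : MeasurableSet E) (hEfin : volume E < ⊤)
    (hgmeas : Measurable g) (hgnonneg : ∀ x ∈ E, 0 ≤ g x)
    {I : Set ℝ} (hI : I.OrdConnected) (hrange : g '' E ⊆ I)
    {s : ℝ} (hs0 : 0 < s) (hsM : ENNReal.ofReal s < volume E) :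
    rearrOn E g s ∈ I := by
  have hmeasb : ∀ b : ℝ, 0 < b → MeasurableSet {x ∈ E | b < |g x|} := fun b _ =>
    hE.inter (measurableSet_lt measurable_const hgmeas.abs)
  set c := rearrOn E g s with hc
  have hc0 : 0 ≤ c := rearr_nonneg E g s
  have hxA : ∃ x ∈ E, g x ≤ c := by
    by_contra hcon
    push_neg at hcon
    have hsub : E ⊆ {x ∈ E | c < |g x|} := fun x hx =>
      ⟨hx, lt_of_lt_of_le (hcon x hx) (le_abs_self _)⟩
    exact absurd ((measure_mono hsub).trans (measure_rearr_le hEfin hmeasb hs0))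
      (not_le.2 hsM)
  have hyB : ∃ y ∈ E, c ≤ g y := by
    rcases eq_or_lt_of_le hc0 with hceq | hcpos
    · obtain ⟨x, hx⟩ := nonempty_of_measure_ne_zero
        (ne_of_gt (lt_of_le_of_lt zero_le hsM))
      exact ⟨x, hx, hceq ▸ hgnonneg x hx⟩
    · set u : ℕ → ℝ := fun n => c - c / (n + 2) with hu
      have hu_pos : ∀ n, 0 < u n := by
        intro n
        have : c / ((n : ℝ) + 2) < c := by
          apply div_lt_self hcpos
          have : (0 : ℝ) ≤ (n : ℝ) := Nat.cast_nonneg n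
          linarith
        simp only [hu]; linarith
      have hu_lt : ∀ n, u n < c := by
        intro n
        have h2 : 0 < c / ((n : ℝ) + 2) := by positivity
        simp only [hu]; linarith
      have hantiT : Antitone fun n => {x ∈ E | u n < |g x|} := by
        intro m n hmn x hx
        refine ⟨hx.1, lt_of_le_of_lt ?_ hx.2⟩
        have h1 : (m : ℝ) + 2 ≤ (n : ℝ) + 2 := by
          have := (Nat.cast_le (α := ℝ)).2 hmn; linarith
        have := div_le_div_of_nonneg_left hcpos.le (by positivity : (0:ℝ) < (m:ℝ) + 2) h1
        simp only [hu]; linarith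
      have hInter : (⋂ n, {x ∈ E | u n < |g x|}) = {x ∈ E | c ≤ |g x|} := by
        ext x
        simp only [mem_iInter, mem_setOf_eq]
        constructor
        · intro hall
          refine ⟨(hall 0).1, ?_⟩
          by_contra hlt
          push_neg at hlt
          have hd : 0 < c - |g x| := by linarith
          obtain ⟨n, hn⟩ := exists_nat_gt (c / (c - |g x|))
          have h2 : c / ((n : ℝ) + 2) < c - |g x| := by
            rw [div_lt_iff₀ (by positivity)]
            have h3 : c / (c - |g x|) < (n : ℝ) + 2 := by linarith
            rw [div_lt_iff₀ hd] at h3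
            linarith [mul_comm (c - |g x|) ((n : ℝ) + 2)]
          have := (hall n).2
          simp only [hu] at this
          linarith
        · rintro ⟨hxE, hx⟩ n
          exact ⟨hxE, lt_of_lt_of_le (hu_lt n) hx⟩
      have htend := tendsto_measure_iInter_atTop (μ := volume)
        (fun n => (hmeasb _ (hu_pos n)).nullMeasurableSet) hantiT
        ⟨0, ((measure_mono (fun x hx => hx.1)).trans_lt hEfin).ne⟩
      rw [hInter] at htend
      have hge : ENNReal.ofReal s ≤ volume {x ∈ E | c ≤ |g x|} :=
        ge_of_tendsto' htend fun n =>
          (measure_gt_of_lt_rearr (hu_pos n) (hu_lt n)).le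
      have hne : {x ∈ E | c ≤ |g x|}.Nonempty := by
        apply nonempty_of_measure_ne_zero
        intro h0
        rw [h0] at hge
        exact absurd hge (not_le.2 (ENNReal.ofReal_pos.2 hs0))
      obtain ⟨y, hyE, hy⟩ := hne
      exact ⟨y, hyE, hy.trans_eq (abs_of_nonneg (hgnonneg y hyE))⟩
  obtain ⟨x, hxE, hxc⟩ := hxA
  obtain ⟨y, hyE, hyc⟩ := hyB
  exact hI.out (hrange ⟨x, hxE, rfl⟩) (hrange ⟨y, hyE, rfl⟩) ⟨hxc, hyc⟩

end Aux

theorem stmt_3 {n : ℕ} (E : Set (Fin n → ℝ)) (hE : MeasurableSet E)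
    (hEfin : volume E < ⊤)
    (f : (Fin n → ℝ) → ℝ) (hfmeas : Measurable f) (hfnonneg : ∀ x ∈ E, 0 ≤ f x)
    (I : Set ℝ) (hI : I.OrdConnected) (hrange : f '' E ⊆ I)
    (φ : ℝ → ℝ) (hφcont : ContinuousOn φ I) (hφanti : StrictAntiOn φ I)
    (hφnonneg : ∀ y ∈ I, 0 ≤ φ y) :
    ∀ᵐ t ∂(volume.restrict (Ioo (0 : ℝ) (volume E).toReal)),
      rearrOn E (φ ∘ f) t = φ (rearrOn E f ((volume E).toReal - t)) := by
  set M := (volume E).toReal with hMdef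
  have hME : volume E = ENNReal.ofReal M := (ENNReal.ofReal_toReal hEfin.ne).symm
  -- measurability of the distribution sets of f
  have hFmeas : ∀ a : ℝ, MeasurableSet {x ∈ E | a < |f x|} := fun a =>
    hE.inter (measurableSet_lt measurable_const hfmeas.abs)
  -- measurability of the distribution sets of φ ∘ f
  have hGmeas : ∀ b : ℝ, 0 < b → MeasurableSet {x ∈ E | b < |(φ ∘ f) x|} := by
    intro b hb
    have hset : {x ∈ E | b < |(φ ∘ f) x|} = E ∩ f ⁻¹' {z ∈ I | b < φ z} := by
      ext x
      simp only [mem_setOf_eq, mem_inter_iff, mem_preimage, Function.comp_apply]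
      constructor
      · rintro ⟨hxE, hx⟩
        have hfI : f x ∈ I := hrange ⟨x, hxE, rfl⟩
        exact ⟨hxE, hfI, by rwa [abs_of_nonneg (hφnonneg _ hfI)] at hx⟩
      · rintro ⟨hxE, hfI, hx⟩
        exact ⟨hxE, by rwa [abs_of_nonneg (hφnonneg _ hfI)]⟩
    rw [hset]
    refine hE.inter (hfmeas ?_)
    refine Set.OrdConnected.measurableSet ⟨fun z₁ hz₁ z₂ hz₂ z hz => ?_⟩
    have hzI : z ∈ I := hI.out hz₁.1 hz₂.1 hz
    refine ⟨hzI, lt_of_lt_of_le hz₂.2 ?_⟩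
    rcases eq_or_lt_of_le hz.2 with h | h
    · rw [h]
    · exact (hφanti hzI hz₂.1 h).le
  -- Part A : rearrOn E (φ∘f) t ≤ φ (rearrOn E f (M - t))
  have hA : ∀ t ∈ Ioo (0 : ℝ) M, rearrOn E (φ ∘ f) t ≤ φ (rearrOn E f (M - t)) := by
    rintro t ⟨ht0, htM⟩
    set a := rearrOn E f (M - t) with ha
    have hsub0 : (0 : ℝ) < M - t := by linarith
    have hsubM : ENNReal.ofReal (M - t) < volume E := by
      rw [hME]
      exact (ENNReal.ofReal_lt_ofReal_iff (by linarith)).2 (by linarith)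
    have haI : a ∈ I := rearr_mem_of_ordConnected hE hEfin hfmeas hfnonneg hI hrange
      hsub0 hsubM
    have ha0 : 0 ≤ a := rearr_nonneg E f (M - t)
    have key : ∀ b, φ a < b → rearrOn E (φ ∘ f) t ≤ b := by
      intro b hb
      have hb0 : 0 < b := lt_of_le_of_lt (hφnonneg a haI) hb
      refine csInf_le (rearr_bddBelow E (φ ∘ f) t) ⟨hb0, ?_⟩
      by_cases hcase : ∀ x ∈ E, a ≤ f x
      · -- the set is empty
        have hempty : {x ∈ E | b < |(φ ∘ f) x|} = ∅ := by
          ext x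
          simp only [mem_setOf_eq, mem_empty_iff_false, iff_false, not_and]
          intro hxE hx
          have hfI : f x ∈ I := hrange ⟨x, hxE, rfl⟩
          have hle : φ (f x) ≤ φ a := by
            rcases eq_or_lt_of_le (hcase x hxE) with h | h
            · rw [h]
            · exact (hφanti haI hfI h).le
          rw [Function.comp_apply, abs_of_nonneg (hφnonneg _ hfI)] at hx
          linarith
        rw [hempty]
        simp
      · push_neg at hcase
        obtain ⟨x₀, hx₀E, hx₀⟩ := hcase
        have hcI : f x₀ ∈ I := hrange ⟨x₀, hx₀E, rfl⟩
        have hap : 0 < a := lt_of_le_of_lt (hfnonneg x₀ hx₀E) hx₀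
        -- pick a'' < a close to a with φ a'' < b
        have hev : ∀ᶠ z in nhdsWithin a I, φ z < b := (hφcont a haI).eventually_lt_const hb
        obtain ⟨ε, hε, hball⟩ := Metric.mem_nhdsWithin_iff.1 hev
        set a'' := max (f x₀) (max (a / 2) (a - ε / 2)) with ha''
        have h1 : a'' < a := max_lt hx₀ (max_lt (by linarith) (by linarith))
        have h2 : 0 < a'' :=
          lt_of_lt_of_le (half_pos hap) ((le_max_left _ _).trans (le_max_right _ _))
        have h3 : a'' ∈ I := hI.out hcI haI ⟨le_max_left _ _, h1.le⟩
        have h4 : φ a'' < b := by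
          apply hball
          refine ⟨?_, h3⟩
          rw [Metric.mem_ball, Real.dist_eq, abs_of_nonpos (by linarith)]
          have : a - ε / 2 ≤ a'' := (le_max_right _ _).trans (le_max_right _ _)
          linarith
        -- the set is contained in {f < a''}
        have hsubset : {x ∈ E | b < |(φ ∘ f) x|} ⊆ {x ∈ E | f x < a''} := by
          rintro x ⟨hxE, hx⟩
          refine ⟨hxE, ?_⟩
          by_contra hge
          push_neg at hge
          have hfI : f x ∈ I := hrange ⟨x, hxE, rfl⟩
          have hle : φ (f x) ≤ φ a'' := by
            rcases eq_or_lt_of_le hge with h | h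
            · rw [← h]
            · exact (hφanti h3 hfI h).le
          rw [Function.comp_apply, abs_of_nonneg (hφnonneg _ hfI)] at hx
          linarith
        have hdisj : Disjoint {x ∈ E | f x < a''} {x ∈ E | a'' < |f x|} := by
          rw [Set.disjoint_left]
          rintro x ⟨hxE, hx1⟩ ⟨_, hx2⟩
          rw [abs_of_nonneg (hfnonneg x hxE)] at hx2
          linarith
        have hAB : volume {x ∈ E | f x < a''} + volume {x ∈ E | a'' < |f x|}
            ≤ volume E := by
          rw [← measure_union hdisj (hFmeas a'')]
          exact measure_mono (union_subset (fun x hx => hx.1) fun x hx => hx.1)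
        have hBge : ENNReal.ofReal (M - t) < volume {x ∈ E | a'' < |f x|} :=
          measure_gt_of_lt_rearr h2 h1
        calc volume {x ∈ E | b < |(φ ∘ f) x|}
            ≤ volume {x ∈ E | f x < a''} := measure_mono hsubset
          _ ≤ volume E - volume {x ∈ E | a'' < |f x|} := ENNReal.le_sub_of_add_le_right
              (ne_top_of_le_ne_top hEfin.ne (measure_mono fun x hx => hx.1)) hAB
          _ ≤ volume E - ENNReal.ofReal (M - t) := tsub_le_tsub_left hBge.le _
          _ = ENNReal.ofReal t := by
              rw [hME, ← ENNReal.ofReal_sub M (by linarith : (0:ℝ) ≤ M - t)]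
              norm_num
    by_contra hlt
    push_neg at hlt
    obtain ⟨b, hb1, hb2⟩ := exists_between hlt
    exact absurd (key b hb1) (not_le.2 hb2)
  -- Part B : φ (rearrOn E f (M - t₂)) ≤ rearrOn E (φ∘f) t₁ for t₁ < t₂
  have hB : ∀ t₁ t₂ : ℝ, 0 < t₁ → t₁ < t₂ → t₂ < M →
      φ (rearrOn E f (M - t₂)) ≤ rearrOn E (φ ∘ f) t₁ := by
    intro t₁ t₂ ht₁ h₁₂ ht₂
    set a := rearrOn E f (M - t₂) with ha
    have hs0 : (0 : ℝ) < M - t₂ := by linarith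
    have hsM : ENNReal.ofReal (M - t₂) < volume E := by
      rw [hME]
      exact (ENNReal.ofReal_lt_ofReal_iff (by linarith)).2 (by linarith)
    have haI : a ∈ I := rearr_mem_of_ordConnected hE hEfin hfmeas hfnonneg hI hrange
      hs0 hsM
    have hmeasb : ∀ b : ℝ, 0 < b → MeasurableSet {x ∈ E | b < |f x|} := fun b _ => hFmeas b
    refine le_csInf (rearr_set_nonempty hEfin hGmeas ht₁) ?_
    rintro b ⟨hb0, hG⟩
    by_contra hlt
    push_neg at hlt
    -- {x ∈ E | ¬ a < |f x|} ⊆ {x ∈ E | b < |ψ x|}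
    have hsub : {x ∈ E | ¬ a < |f x|} ⊆ {x ∈ E | b < |(φ ∘ f) x|} := by
      rintro x ⟨hxE, hx⟩
      have hfI : f x ∈ I := hrange ⟨x, hxE, rfl⟩
      have hfa : f x ≤ a := by
        rw [abs_of_nonneg (hfnonneg x hxE)] at hx
        exact not_lt.1 hx
      have hle : φ a ≤ φ (f x) := by
        rcases eq_or_lt_of_le hfa with h | h
        · rw [h]
        · exact (hφanti hfI haI h).le
      refine ⟨hxE, ?_⟩
      rw [Function.comp_apply, abs_of_nonneg (hφnonneg _ hfI)]
      linarith
    have hFa : volume {x ∈ E | a < |f x|} ≤ ENNReal.ofReal (M - t₂) :=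
      measure_rearr_le hEfin hmeasb hs0
    have hdisj : Disjoint {x ∈ E | ¬ a < |f x|} {x ∈ E | a < |f x|} := by
      rw [Set.disjoint_left]
      rintro x ⟨_, hx1⟩ ⟨_, hx2⟩
      exact hx1 hx2
    have hpart : volume {x ∈ E | ¬ a < |f x|} + volume {x ∈ E | a < |f x|} = volume E := by
      rw [← measure_union hdisj (hFmeas a)]
      congr 1
      ext x
      simp only [mem_union, mem_setOf_eq]
      constructor
      · rintro (⟨hx, _⟩ | ⟨hx, _⟩) <;> exact hx
      · intro hx
        by_cases h : a < |f x|
        · exact Or.inr ⟨hx, h⟩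
        · exact Or.inl ⟨hx, h⟩
    have hkey : ENNReal.ofReal t₂ + ENNReal.ofReal (M - t₂)
        ≤ volume {x ∈ E | ¬ a < |f x|} + ENNReal.ofReal (M - t₂) := by
      rw [← ENNReal.ofReal_add (by linarith) (by linarith)]
      have : t₂ + (M - t₂) = M := by ring
      rw [this, ← hME, ← hpart]
      exact add_le_add le_rfl hFa
    have hkey2 : ENNReal.ofReal t₂ ≤ volume {x ∈ E | ¬ a < |f x|} :=
      ENNReal.le_of_add_le_add_right ENNReal.ofReal_ne_top hkey
    have hcontra : ENNReal.ofReal t₂ ≤ ENNReal.ofReal t₁ :=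
      hkey2.trans ((measure_mono hsub).trans hG)
    exact absurd hcontra (not_le.2 ((ENNReal.ofReal_lt_ofReal_iff (by linarith)).2 h₁₂))
  -- Assemble : the bad set is countable
  set h : ℝ → ℝ := rearrOn E (φ ∘ f) with hh
  set k : ℝ → ℝ := fun t => φ (rearrOn E f (M - t)) with hk
  set D : Set ℝ := {t | t ∈ Ioo (0 : ℝ) M ∧ h t < k t} with hD
  have hDcount : D.Countable := by
    apply Set.PairwiseDisjoint.countable_of_isOpen
      (s := fun t => Ioo (h t) (k t)) ?_ (fun t _ => isOpen_Ioo)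
      (fun t ht => nonempty_Ioo.2 ht.2)
    have key : ∀ t₁ ∈ D, ∀ t₂ ∈ D, t₁ < t₂ →
        Disjoint (Ioo (h t₁) (k t₁)) (Ioo (h t₂) (k t₂)) := by
      rintro t₁ ht₁ t₂ ht₂ h12
      have hkh : k t₂ ≤ h t₁ := hB t₁ t₂ ht₁.1.1 h12 ht₂.1.2
      rw [Set.disjoint_left]
      rintro z ⟨hz1, _⟩ ⟨_, hz2⟩
      linarith
    rintro t₁ ht₁ t₂ ht₂ hne
    rcases lt_or_gt_of_ne hne with h12 | h12
    · exact key t₁ ht₁ t₂ ht₂ h12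
    · exact (key t₂ ht₂ t₁ ht₁ h12).symm
  have hDzero : volume D = 0 := hDcount.measure_zero _
  have hae1 : ∀ᵐ t ∂(volume.restrict (Ioo (0 : ℝ) M)), t ∉ D :=
    ae_restrict_of_ae (measure_eq_zero_iff_ae_notMem.1 hDzero)
  filter_upwards [hae1, ae_restrict_mem measurableSet_Ioo] with t htD htIoo
  refine le_antisymm (hA t htIoo) ?_
  by_contra hlt
  push_neg at hlt
  exact htD ⟨htIoo, hlt⟩
end

section
/- Define f on (0,1) by f(x) = 1 for x ∈ (0,1/2] and f(x) = 2 for x ∈ (1/2,1), and let ψ(x) := 1/f(x). Then the equality ψ^*(t) = 1/f^*(1-t) fails at t = 1/2; specifically ψ^*(1/2) = 1/2 while 1/f^*(1/2) = 1. -/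
open MeasureTheory Set

noncomputable def fex : ℝ → ℝ := fun x => if x ∈ Ioc (0 : ℝ) (1 / 2) then 1 else 2

noncomputable def ψex : ℝ → ℝ := fun x => 1 / fex x

theorem stmt_4 :
    rearrOn (Ioo (0 : ℝ) 1) ψex (1 / 2) = 1 / 2 ∧
    1 / rearrOn (Ioo (0 : ℝ) 1) fex (1 - 1 / 2) = 1 ∧
    rearrOn (Ioo (0 : ℝ) 1) ψex (1 / 2) ≠
      1 / rearrOn (Ioo (0 : ℝ) 1) fex (1 - 1 / 2) := by
  have hpsi : rearrOn (Ioo (0:ℝ) 1) ψex (1/2) = 1/2 := by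
    have hset : {a : ℝ | 0 < a ∧ volume {x ∈ Ioo (0:ℝ) 1 | a < |ψex x|} ≤ ENNReal.ofReal (1/2)}
        = Ici (1/2) := by
      ext a
      simp only [mem_setOf_eq, mem_Ici]
      constructor
      · rintro ⟨ha, hvol⟩
        by_contra h
        push_neg at h
        have hsub : Ioo (0:ℝ) 1 ⊆ {x ∈ Ioo (0:ℝ) 1 | a < |ψex x|} := by
          intro x hx
          refine ⟨hx, ?_⟩
          have h2 : (1:ℝ)/2 ≤ ψex x := by
            unfold ψex fex
            split <;> norm_num
          rw [abs_of_nonneg (le_trans (by norm_num) h2)]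
          exact lt_of_lt_of_le h h2
        have hm := le_trans (measure_mono hsub) hvol
        rw [Real.volume_Ioo] at hm
        rw [ENNReal.ofReal_le_ofReal_iff (by norm_num)] at hm
        norm_num at hm
      · intro ha
        refine ⟨lt_of_lt_of_le (by norm_num) ha, ?_⟩
        have hsub : {x ∈ Ioo (0:ℝ) 1 | a < |ψex x|} ⊆ Ioc (0:ℝ) (1/2) := by
          rintro x ⟨hx, hax⟩
          by_contra hxn
          have hval : ψex x = 1/2 := by
            unfold ψex fex
            rw [if_neg hxn]
          rw [hval, abs_of_nonneg (by norm_num)] at hax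
          exact absurd hax (not_lt.2 ha)
        calc volume {x ∈ Ioo (0:ℝ) 1 | a < |ψex x|} ≤ volume (Ioc (0:ℝ) (1/2)) :=
              measure_mono hsub
          _ = ENNReal.ofReal (1/2) := by rw [Real.volume_Ioc]; norm_num
    unfold rearrOn
    rw [hset, csInf_Ici]
  have hf : rearrOn (Ioo (0:ℝ) 1) fex (1 - 1/2) = 1 := by
    have hset : {a : ℝ | 0 < a ∧ volume {x ∈ Ioo (0:ℝ) 1 | a < |fex x|} ≤ ENNReal.ofReal (1 - 1/2)}
        = Ici 1 := by
      ext a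
      simp only [mem_setOf_eq, mem_Ici]
      constructor
      · rintro ⟨ha, hvol⟩
        by_contra h
        push_neg at h
        have hsub : Ioo (0:ℝ) 1 ⊆ {x ∈ Ioo (0:ℝ) 1 | a < |fex x|} := by
          intro x hx
          refine ⟨hx, ?_⟩
          have h2 : (1:ℝ) ≤ fex x := by
            unfold fex
            split <;> norm_num
          rw [abs_of_nonneg (le_trans (by norm_num) h2)]
          exact lt_of_lt_of_le h h2
        have hm := le_trans (measure_mono hsub) hvol
        rw [Real.volume_Ioo] at hm
        rw [ENNReal.ofReal_le_ofReal_iff (by norm_num)] at hm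
        norm_num at hm
      · intro ha
        refine ⟨lt_of_lt_of_le (by norm_num) ha, ?_⟩
        have hsub : {x ∈ Ioo (0:ℝ) 1 | a < |fex x|} ⊆ Ioo (1/2:ℝ) 1 := by
          rintro x ⟨hx, hax⟩
          refine ⟨?_, hx.2⟩
          by_contra hxn
          push_neg at hxn
          have hmem : x ∈ Ioc (0:ℝ) (1/2) := ⟨hx.1, hxn⟩
          have hval : fex x = 1 := by unfold fex; rw [if_pos hmem]
          rw [hval, abs_of_nonneg (by norm_num)] at hax
          exact absurd hax (not_lt.2 ha)
        calc volume {x ∈ Ioo (0:ℝ) 1 | a < |fex x|} ≤ volume (Ioo (1/2:ℝ) 1) :=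
              measure_mono hsub
          _ = ENNReal.ofReal (1 - 1/2) := by rw [Real.volume_Ioo]
    unfold rearrOn
    rw [hset, csInf_Ici]
  refine ⟨hpsi, by rw [hf]; norm_num, by rw [hpsi, hf]; norm_num⟩
end

section
/- Let f be a non-negative measurable function on a measurable set E ⊂ ℝ^n of finite measure and let α ≥ 0. Define g(x) := f(x)·χ_{{x ∈ E : f(x) > α}}(x). Then for all t ∈ (0, |E|), g^*(t) = f^*(t)·χ_{{t : f^*(t) > α}}(t); that is, g^*(t) = f^*(t) if f^*(t) > α and g^*(t) = 0 if f^*(t) ≤ α. -/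
open MeasureTheory Set Filter

theorem stmt_5 {n : ℕ} (E : Set (Fin n → ℝ)) (hE : MeasurableSet E)
    (hEfin : volume E < ⊤)
    (f : (Fin n → ℝ) → ℝ) (hfmeas : Measurable f) (hfnonneg : ∀ x ∈ E, 0 ≤ f x)
    (α : ℝ) (hα : 0 ≤ α)
    (g : (Fin n → ℝ) → ℝ)
    (hg : g = fun x => Set.indicator {x ∈ E | α < f x} f x)
    (t : ℝ) (ht : t ∈ Ioo (0 : ℝ) (volume E).toReal) :
    rearrOn E g t = if α < rearrOn E f t then rearrOn E f t else 0 := by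
  obtain ⟨ht0, htE⟩ := ht
  set T : ENNReal := ENNReal.ofReal t with hTdef
  have hT0 : 0 < T := ENNReal.ofReal_pos.mpr ht0
  set F : ℝ → ENNReal := fun a => volume {x ∈ E | a < |f x|} with hFdef
  have hFmono : ∀ a b : ℝ, a ≤ b → F b ≤ F a := fun a b hab =>
    measure_mono fun x hx => ⟨hx.1, lt_of_le_of_lt hab hx.2⟩
  have hmeasF : ∀ a : ℝ, MeasurableSet {x ∈ E | a < |f x|} := fun a =>
    hE.inter (hfmeas.abs measurableSet_Ioi)
  have hFfin : ∀ a : ℝ, F a ≠ ⊤ := fun a =>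
    (lt_of_le_of_lt (measure_mono (sep_subset _ _)) hEfin).ne
  set Sf : Set ℝ := {a : ℝ | 0 < a ∧ F a ≤ T} with hSfdef
  -- Sf is nonempty
  have hSfne : Sf.Nonempty := by
    set A : ℕ → Set (Fin n → ℝ) := fun k => {x ∈ E | (k : ℝ) < |f x|} with hAdef
    have hAanti : Antitone A := fun i j hij =>
      fun x hx => ⟨hx.1, lt_of_le_of_lt (by exact_mod_cast hij) hx.2⟩
    have hAempty : ⋂ k, A k = ∅ := by
      ext x
      simp only [mem_iInter, mem_empty_iff_false, iff_false]
      intro h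
      obtain ⟨k, hk⟩ := exists_nat_gt |f x|
      exact absurd (h k).2 (not_lt.mpr hk.le)
    have hinf : (⨅ k : ℕ, F (k : ℝ)) = 0 := by
      have := hAanti.measure_iInter (μ := volume) (fun k => (hmeasF _).nullMeasurableSet)
        ⟨0, (lt_of_le_of_lt (measure_mono (sep_subset _ _)) hEfin).ne⟩
      rw [hAempty] at this
      simpa using this.symm
    have : ∃ k : ℕ, F (k : ℝ) < T := by
      by_contra h
      push_neg at h
      have : T ≤ ⨅ k : ℕ, F (k : ℝ) := le_iInf h
      rw [hinf] at this
      exact absurd this (not_le.mpr hT0)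
    obtain ⟨k, hk⟩ := this
    exact ⟨(k : ℝ) + 1, by positivity,
      le_trans (hFmono _ _ (by linarith)) hk.le⟩
  have hSfbdd : BddBelow Sf := ⟨0, fun a ha => ha.1.le⟩
  set m : ℝ := sInf Sf with hmdef
  have hm0 : 0 ≤ m := le_csInf hSfne fun a ha => ha.1.le
  have hmemSf : ∀ a : ℝ, m < a → F a ≤ T := by
    intro a ha
    obtain ⟨b, hb, hba⟩ := exists_lt_of_csInf_lt hSfne ha
    exact le_trans (hFmono b a hba.le) hb.2
  -- right continuity at α
  have hrearr_f : rearrOn E f t = m := rfl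
  -- the level sets of g
  have hset : ∀ a : ℝ, 0 < a → {x ∈ E | a < |g x|} = {x ∈ E | max α a < |f x|} := by
    intro a ha
    ext x
    simp only [mem_setOf_eq]
    constructor
    · rintro ⟨hxE, hx⟩
      refine ⟨hxE, ?_⟩
      by_cases hfx : α < f x
      · have hgx : g x = f x := by
          rw [hg]; exact Set.indicator_of_mem (show x ∈ {x | x ∈ E ∧ α < f x} from ⟨hxE, hfx⟩) f
        have h0 : 0 ≤ f x := hfnonneg x hxE
        rw [hgx, abs_of_nonneg h0] at hx
        rw [abs_of_nonneg h0]
        exact max_lt hfx hx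
      · have hgx : g x = 0 := by
          rw [hg]; exact Set.indicator_of_notMem (fun h => hfx h.2) f
        rw [hgx] at hx
        simp at hx
        linarith
    · rintro ⟨hxE, hx⟩
      have h0 : 0 ≤ f x := hfnonneg x hxE
      rw [abs_of_nonneg h0] at hx
      have hαf : α < f x := lt_of_le_of_lt (le_max_left _ _) hx
      have haf : a < f x := lt_of_le_of_lt (le_max_right _ _) hx
      have hgx : g x = f x := by
        rw [hg]; exact Set.indicator_of_mem (show x ∈ {x | x ∈ E ∧ α < f x} from ⟨hxE, hαf⟩) f
      exact ⟨hxE, by rw [hgx, abs_of_nonneg h0]; exact haf⟩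
  have hSg : {a : ℝ | 0 < a ∧ volume {x ∈ E | a < |g x|} ≤ T}
      = {a : ℝ | 0 < a ∧ F (max α a) ≤ T} := by
    ext a
    simp only [mem_setOf_eq]
    constructor
    · rintro ⟨ha, hv⟩
      rw [hset a ha] at hv
      exact ⟨ha, hv⟩
    · rintro ⟨ha, hv⟩
      refine ⟨ha, ?_⟩
      rw [hset a ha]
      exact hv
  have hrearr_g : rearrOn E g t = sInf {a : ℝ | 0 < a ∧ F (max α a) ≤ T} := by
    rw [rearrOn, ← hSg]
  rw [hrearr_f, hrearr_g]
  by_cases hcase : α < m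
  · rw [if_pos hcase]
    congr 1
    ext a
    simp only [mem_setOf_eq]
    constructor
    · rintro ⟨ha, hv⟩
      refine ⟨ha, ?_⟩
      rcases le_or_gt α a with h | h
      · rwa [max_eq_right h] at hv
      · rw [max_eq_left h.le] at hv
        exfalso
        have : m ≤ α := csInf_le hSfbdd ⟨lt_of_lt_of_le ha h.le, hv⟩
        linarith
    · rintro ⟨ha, hv⟩
      have hma : m ≤ a := csInf_le hSfbdd ⟨ha, hv⟩
      exact ⟨ha, by rwa [max_eq_right (le_trans hcase.le hma)]⟩
  · rw [if_neg hcase]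
    push_neg at hcase
    -- F α ≤ T by right continuity
    have hFα : F α ≤ T := by
      have hU : {x ∈ E | α < |f x|} = ⋃ k : ℕ, {x ∈ E | α + 1 / (k + 1) < |f x|} := by
        ext x
        simp only [mem_iUnion, mem_setOf_eq]
        constructor
        · rintro ⟨hxE, hx⟩
          obtain ⟨k, hk⟩ := exists_nat_one_div_lt (sub_pos.mpr hx)
          exact ⟨k, hxE, by push_cast at hk ⊢; linarith⟩
        · rintro ⟨k, hxE, hx⟩
          refine ⟨hxE, lt_of_le_of_lt ?_ hx⟩
          have : (0:ℝ) < 1 / ((k:ℝ) + 1) := by positivity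
          linarith
      have hmonoU : Monotone fun k : ℕ => {x ∈ E | α + 1 / ((k:ℝ) + 1) < |f x|} := by
        intro i j hij x hx
        refine ⟨hx.1, lt_of_le_of_lt ?_ hx.2⟩
        have hij' : (i:ℝ) + 1 ≤ (j:ℝ) + 1 := by exact_mod_cast Nat.succ_le_succ hij
        have : 1 / ((j:ℝ) + 1) ≤ 1 / ((i:ℝ) + 1) :=
          one_div_le_one_div_of_le (by positivity) hij'
        linarith
      have := hmonoU.measure_iUnion (μ := volume)
      rw [← hU] at this
      rw [show F α = volume {x ∈ E | α < |f x|} from rfl, this]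
      refine iSup_le fun k => ?_
      refine hmemSf _ ?_
      have : (0:ℝ) < 1 / ((k:ℝ) + 1) := by positivity
      linarith
    have hall : ∀ a : ℝ, 0 < a → a ∈ {a : ℝ | 0 < a ∧ F (max α a) ≤ T} := by
      intro a ha
      exact ⟨ha, le_trans (hFmono α (max α a) (le_max_left _ _)) hFα⟩
    have hbdd : BddBelow {a : ℝ | 0 < a ∧ F (max α a) ≤ T} := ⟨0, fun a ha => ha.1.le⟩
    have hne : {a : ℝ | 0 < a ∧ F (max α a) ≤ T}.Nonempty := ⟨1, hall 1 one_pos⟩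
    refine le_antisymm ?_ (le_csInf hne fun a ha => ha.1.le)
    refine le_of_forall_pos_le_add fun ε hε => ?_
    simpa using csInf_le hbdd (hall ε hε)
end

section
/- Let Q ⊂ ℝ^n be a cube with 0 ∉ Q, and let 0 < δ < 1. Then there exists a measurable subset E ⊂ Q with |E| = δ|Q| such that for all x ∈ Q and all y ∈ Q \ E, |x|/|y| ≤ √n / δ. -/
open MeasureTheory Set

/-- An open axis-parallel cube in Euclidean space `ℝⁿ`. -/
def cubeE (n : ℕ) (a : Fin n → ℝ) (h : ℝ) : Set (EuclideanSpace ℝ (Fin n)) :=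
  {x | ∀ i, x i ∈ Ioo (a i) (a i + h)}

theorem stmt_14 {n : ℕ} (hn : 0 < n) (a : Fin n → ℝ) (h : ℝ) (hh : 0 < h)
    (h0 : (0 : EuclideanSpace ℝ (Fin n)) ∉ cubeE n a h)
    (δ : ℝ) (hδ : δ ∈ Ioo (0:ℝ) 1) :
    ∃ E : Set (EuclideanSpace ℝ (Fin n)), MeasurableSet E ∧ E ⊆ cubeE n a h ∧
      volume E = ENNReal.ofReal (δ * h ^ n) ∧
      ∀ x ∈ cubeE n a h, ∀ y ∈ cubeE n a h \ E, ‖x‖ / ‖y‖ ≤ Real.sqrt n / δ := by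
  obtain ⟨hδ0, hδ1⟩ := hδ
  set f : Fin n → ℝ := fun j => max |a j| |a j + h| with hf
  obtain ⟨j, -, hj⟩ := Finset.exists_max_image Finset.univ f ⟨⟨0, hn⟩, Finset.mem_univ _⟩
  set M := f j with hM
  have hjle : ∀ i, f i ≤ M := fun i => hj i (Finset.mem_univ i)
  -- some coordinate interval misses 0
  have h0' : ∃ i, a i + h ≤ 0 ∨ 0 ≤ a i := by
    by_contra hc
    push_neg at hc
    refine h0 fun i => ?_
    have h1 := (hc i).1
    have h2 := (hc i).2
    exact ⟨by simpa using h2, by simpa using h1⟩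
  obtain ⟨i0, hi0⟩ := h0'
  have hfM : h ≤ M := by
    refine le_trans ?_ (hjle i0)
    rcases hi0 with h1 | h1
    · calc h ≤ |a i0| := by rw [abs_of_nonpos (by linarith)]; linarith
      _ ≤ f i0 := le_max_left _ _
    · calc h ≤ |a i0 + h| := by rw [abs_of_nonneg (by linarith)]; linarith
      _ ≤ f i0 := le_max_right _ _
  have hM0 : 0 < M := lt_of_lt_of_le hh hfM
  -- the maximizing coordinate misses 0
  have hjcase : 0 ≤ a j ∨ a j + h ≤ 0 := by
    by_contra hc
    push_neg at hc
    obtain ⟨h1, h2⟩ := hc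
    have : M < h := by
      have : f j < h := by
        simp only [hf, max_lt_iff]
        constructor
        · rw [abs_of_nonpos (le_of_lt h1)]; linarith
        · rw [abs_of_pos h2]; linarith
      rw [hM]; exact this
    linarith
  -- choose start point s of removed interval
  set s : ℝ := if 0 ≤ a j then a j else a j + h - δ * h with hs
  have hP1 : a j ≤ s := by
    rw [hs]; split_ifs with hc
    · exact le_refl _
    · nlinarith
  have hP2 : s + δ * h ≤ a j + h := by
    rw [hs]; split_ifs with hc
    · nlinarith
    · linarith
  have hMj1 : 0 ≤ a j → M = a j + h := by
    intro hc
    have : f j = a j + h := by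
      simp only [hf]
      rw [abs_of_nonneg hc, abs_of_nonneg (by linarith), max_eq_right (by linarith)]
    rw [hM, this]
  have hMj2 : a j + h ≤ 0 → M = -(a j) := by
    intro hc
    have : f j = -(a j) := by
      simp only [hf]
      rw [abs_of_nonpos (by linarith), abs_of_nonpos hc, max_eq_left (by linarith)]
    rw [hM, this]
  have hP3 : ∀ t, a j < t → t < a j + h → t ∉ Ioo s (s + δ * h) → δ * M ≤ |t| := by
    intro t ht1 ht2 ht3
    rw [mem_Ioo, not_and_or, not_lt, not_lt] at ht3
    rw [hs] at ht3
    rcases hjcase with hc | hc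
    · have hMeq := hMj1 hc
      rw [if_pos hc] at ht3
      rcases ht3 with h1 | h1
      · linarith
      · rw [abs_of_pos (by linarith)]
        nlinarith
    · have hc' : ¬ (0 ≤ a j) := by intro hcc; nlinarith
      have hMeq := hMj2 hc
      rw [if_neg hc'] at ht3
      rcases ht3 with h1 | h1
      · rw [abs_of_neg (by linarith)]
        nlinarith
      · linarith
  -- define E
  set S : Fin n → Set ℝ := fun i => if i = j then Ioo s (s + δ * h) else Ioo (a i) (a i + h)
    with hS
  have hSmeas : ∀ i, MeasurableSet (S i) := by
    intro i
    show MeasurableSet (if i = j then Ioo s (s + δ * h) else Ioo (a i) (a i + h))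
    split_ifs <;> exact measurableSet_Ioo
  refine ⟨(fun x : EuclideanSpace ℝ (Fin n) => (x : Fin n → ℝ)) ⁻¹' (univ.pi S), ?_, ?_, ?_, ?_⟩
  · exact (MeasurableEquiv.toLp 2 (Fin n → ℝ)).symm.measurable
      (MeasurableSet.univ_pi hSmeas)
  · intro x hx i
    have hxi : x i ∈ S i := hx i (mem_univ i)
    have hxi' : x i ∈ (if i = j then Ioo s (s + δ * h) else Ioo (a i) (a i + h)) := hxi
    split_ifs at hxi' with hc
    · subst hc
      obtain ⟨u1, u2⟩ := hxi'
      exact ⟨by linarith, by linarith⟩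
    · exact hxi'
  · have step1 : volume ((fun x : EuclideanSpace ℝ (Fin n) => (x : Fin n → ℝ)) ⁻¹' (univ.pi S))
        = volume (univ.pi S) :=
      (EuclideanSpace.volume_preserving_symm_measurableEquiv_toLp (Fin n)).measure_preimage
        (MeasurableSet.univ_pi hSmeas).nullMeasurableSet
    rw [step1, volume_pi_pi]
    have hvol : ∀ i, volume (S i) = ENNReal.ofReal (if i = j then δ * h else h) := by
      intro i
      show volume (if i = j then Ioo s (s + δ * h) else Ioo (a i) (a i + h)) = _
      split_ifs <;> simp [Real.volume_Ioo]
    simp_rw [hvol]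
    rw [← ENNReal.ofReal_prod_of_nonneg (fun i _ => by split_ifs <;> positivity)]
    congr 1
    rw [← Finset.mul_prod_erase Finset.univ _ (Finset.mem_univ j), if_pos rfl,
      Finset.prod_congr rfl (fun i hi => if_neg (Finset.ne_of_mem_erase hi)),
      Finset.prod_const]
    have hcard : (Finset.univ.erase j).card = n - 1 := by
      rw [Finset.card_erase_of_mem (Finset.mem_univ j), Finset.card_univ, Fintype.card_fin]
    rw [hcard, mul_assoc, ← pow_succ']
    congr 2
    omega
  · intro x hx y hy
    obtain ⟨hyQ, hyE⟩ := hy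
    -- ‖x‖ ≤ √n * M
    have hxbound : ‖x‖ ≤ Real.sqrt n * M := by
      rw [EuclideanSpace.norm_eq]
      have hsum : (∑ i, ‖x i‖ ^ 2) ≤ n * M ^ 2 := by
        calc (∑ i, ‖x i‖ ^ 2) ≤ ∑ _i : Fin n, M ^ 2 := by
              refine Finset.sum_le_sum (fun i _ => ?_)
              have hxi := hx i
              have habs : |x i| ≤ M := by
                refine le_trans ?_ (hjle i)
                rcases le_or_gt 0 (x i) with hc | hc
                · rw [abs_of_nonneg hc]
                  exact le_trans (le_of_lt hxi.2) (le_trans (le_abs_self _) (le_max_right _ _))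
                · rw [abs_of_neg hc]
                  refine le_trans ?_ (le_max_left _ _)
                  rw [← abs_neg]
                  exact le_trans (by linarith [hxi.1]) (le_abs_self _)
              calc ‖x i‖ ^ 2 = |x i| ^ 2 := by rw [Real.norm_eq_abs]
                _ ≤ M ^ 2 := by nlinarith [abs_nonneg (x i)]
          _ = n * M ^ 2 := by simp [Finset.sum_const, Finset.card_univ]
      calc Real.sqrt (∑ i, ‖x i‖ ^ 2) ≤ Real.sqrt (n * M ^ 2) := Real.sqrt_le_sqrt hsum
        _ = Real.sqrt n * M := by
            rw [Real.sqrt_mul (Nat.cast_nonneg n), Real.sqrt_sq (le_of_lt hM0)]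
    -- ‖y‖ ≥ δ * M
    have hyj : y j ∉ Ioo s (s + δ * h) := by
      intro hc
      refine hyE (fun i _ => ?_)
      show y i ∈ (if i = j then Ioo s (s + δ * h) else Ioo (a i) (a i + h))
      split_ifs with hcc
      · subst hcc; exact hc
      · exact hyQ i
    have hyjQ := hyQ j
    have hylow : δ * M ≤ |y j| := hP3 (y j) hyjQ.1 hyjQ.2 hyj
    have hynorm : δ * M ≤ ‖y‖ := by
      refine le_trans hylow ?_
      rw [EuclideanSpace.norm_eq, ← Real.sqrt_sq_eq_abs]
      refine Real.sqrt_le_sqrt ?_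
      calc (y j) ^ 2 = ‖y j‖ ^ 2 := by rw [Real.norm_eq_abs, sq_abs]
        _ ≤ ∑ i, ‖y i‖ ^ 2 :=
            Finset.single_le_sum (f := fun i => ‖y i‖ ^ 2)
              (fun i _ => sq_nonneg _) (Finset.mem_univ j)
    have hypos : 0 < ‖y‖ := lt_of_lt_of_le (by positivity) hynorm
    rw [div_le_div_iff₀ hypos hδ0]
    nlinarith [Real.sqrt_nonneg (n : ℝ), norm_nonneg x]
end

section
/- Let p : ℝ^n → ℝ be measurable with 0 < p_- ≤ p_+ < ∞, let 0 < δ ≤ e^{-8 p_+}, and let Q ⊂ ℝ^n be a cube. Then ∫_Q ∫_Q δ^{1/|p(x)-p(y)|} dx dy ≤ |Q| · inf_{ν ∈ [p_-, p_+]} ∫_Q δ^{1/(2|p(x)-ν|)} dx, with the convention δ^{1/0} = δ^∞ = 0. -/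
open MeasureTheory Set

/-- An open axis-parallel cube in `ℝⁿ`. -/
def cube (n : ℕ) (a : Fin n → ℝ) (h : ℝ) : Set (Fin n → ℝ) :=
  univ.pi fun i => Ioo (a i) (a i + h)


lemma convexAux {c : ℝ} (hc : 0 < c) :
    ConvexOn ℝ (Ioc 0 (c/2)) fun t : ℝ => Real.exp (-(c/t)) := by
  have hd1 : ∀ t : ℝ, t ≠ 0 →
      HasDerivAt (fun t : ℝ => Real.exp (-(c/t))) (Real.exp (-(c/t)) * (c/t^2)) t := by
    intro t ht
    have h2 : HasDerivAt (fun t : ℝ => -(c/t)) (c/t^2) t := by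
      have A := ((hasDerivAt_inv ht).const_mul c).neg
      have hfun : (fun x : ℝ => -(c * x⁻¹)) = fun t : ℝ => -(c/t) := by
        funext x; rw [div_eq_mul_inv]
      have hval : -(c * -(t^2)⁻¹) = c/t^2 := by field_simp
      rw [hval] at A; exact A.congr_of_eventuallyEq (Filter.Eventually.of_forall fun x => by simp [div_eq_mul_inv])
    simpa using h2.exp
  have heq : ∀ t : ℝ, t ≠ 0 →
      deriv (fun t : ℝ => Real.exp (-(c/t))) t = Real.exp (-(c/t)) * (c/t^2) :=
    fun t ht => (hd1 t ht).deriv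
  have hd2 : ∀ t : ℝ, t ≠ 0 →
      HasDerivAt (fun t : ℝ => Real.exp (-(c/t)) * (c/t^2))
        (Real.exp (-(c/t)) * (c*(c - 2*t)/t^4)) t := by
    intro t ht
    have h3 : HasDerivAt (fun t : ℝ => c/t^2) (-(2*c/t^3)) t := by
      have h4 : HasDerivAt (fun t : ℝ => t^2) (2*t) t := by
        simpa using hasDerivAt_pow 2 t
      have A := (h4.inv (pow_ne_zero 2 ht)).const_mul c
      have hfun : (fun y : ℝ => c * (y^2)⁻¹) = fun t : ℝ => c/t^2 := by
        funext x; rw [div_eq_mul_inv]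
      have hval : c * (-(2*t)/(t^2)^2) = -(2*c/t^3) := by field_simp
      rw [hval] at A; exact A.congr_of_eventuallyEq (Filter.Eventually.of_forall fun x => by simp [div_eq_mul_inv])
    have := ((hd1 t ht).mul h3)
    refine this.congr_deriv ?_
    field_simp
    ring
  apply convexOn_of_deriv2_nonneg (convex_Ioc _ _)
  · apply Real.continuous_exp.comp_continuousOn
    exact (continuousOn_const.div continuousOn_id fun x hx => ne_of_gt hx.1).neg
  · rw [interior_Ioc]
    intro t ht
    exact ((hd1 t (ne_of_gt ht.1)).differentiableAt).differentiableWithinAt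
  · rw [interior_Ioc]
    intro t ht
    have hev : deriv (fun t : ℝ => Real.exp (-(c/t))) =ᶠ[nhds t]
        fun t : ℝ => Real.exp (-(c/t)) * (c/t^2) := by
      filter_upwards [eventually_ne_nhds (ne_of_gt ht.1)] with y hy using heq y hy
    exact (((hd2 t (ne_of_gt ht.1)).differentiableAt).congr_of_eventuallyEq hev).differentiableWithinAt
  · rw [interior_Ioc]
    intro t ht
    have hev : deriv (fun t : ℝ => Real.exp (-(c/t))) =ᶠ[nhds t]
        fun t : ℝ => Real.exp (-(c/t)) * (c/t^2) := by
      filter_upwards [eventually_ne_nhds (ne_of_gt ht.1)] with y hy using heq y hy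
    have : deriv (deriv fun t : ℝ => Real.exp (-(c/t))) t
        = Real.exp (-(c/t)) * (c*(c - 2*t)/t^4) := by
      rw [hev.deriv_eq]
      exact (hd2 t (ne_of_gt ht.1)).deriv
    simp only [Function.iterate_succ, Function.iterate_zero, Function.comp_apply, id_eq]
    rw [this]
    have ht0 : 0 < t := ht.1
    have : 0 ≤ c - 2*t := by nlinarith [ht.2]
    positivity

lemma key_ineq {δ pm pp : ℝ} (hδ0 : 0 < δ) (hpm : 0 < pm) (hpmpp : pm ≤ pp)
    (hδ : δ ≤ Real.exp (-8 * pp)) {a b ν : ℝ}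
    (ha : a ∈ Icc pm pp) (hb : b ∈ Icc pm pp) (hν : ν ∈ Icc pm pp) :
    (if a = b then (0:ℝ) else δ ^ (1 / |a - b|)) ≤
      ((if a = ν then (0:ℝ) else δ ^ (1 / (2 * |a - ν|))) +
       (if b = ν then (0:ℝ) else δ ^ (1 / (2 * |b - ν|)))) / 2 := by
  have hpp : 0 < pp := lt_of_lt_of_le hpm hpmpp
  have hδ1 : δ ≤ 1 := hδ.trans (by
    rw [← Real.exp_zero]
    exact Real.exp_le_exp.2 (by nlinarith))
  have hlog : Real.log δ ≤ -8 * pp := by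
    calc Real.log δ ≤ Real.log (Real.exp (-8*pp)) := Real.log_le_log hδ0 hδ
    _ = -8*pp := Real.log_exp _
  set c : ℝ := -Real.log δ with hcdef
  have hc : 8 * pp ≤ c := by simp only [hcdef]; linarith
  have hc0 : 0 < c := by nlinarith
  have hrpow : ∀ e : ℝ, δ ^ e = Real.exp (-(c * e)) := by
    intro e
    rw [Real.rpow_def_of_pos hδ0, hcdef]
    ring_nf
  have hhalf : ∀ r : ℝ, 0 < r → r ≤ pp → δ ^ (1/(2*r)) ≤ 1/2 := by
    intro r hr hrpp
    have h4 : (4:ℝ) ≤ c * (1/(2*r)) := by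
      rw [mul_one_div, le_div_iff₀ (by linarith)]
      nlinarith
    have : δ ^ (1/(2*r)) ≤ Real.exp (-4) := by
      rw [hrpow]
      exact Real.exp_le_exp.2 (by linarith)
    refine this.trans ?_
    rw [Real.exp_neg]
    rw [inv_le_comm₀ (Real.exp_pos 4) (by norm_num)]
    calc (1/2 : ℝ)⁻¹ = 2 := by norm_num
    _ ≤ Real.exp 4 := by nlinarith [Real.add_one_le_exp (4:ℝ)]
  -- bounds on distances
  have habs : ∀ u v : ℝ, u ∈ Icc pm pp → v ∈ Icc pm pp → |u - v| ≤ pp := by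
    intro u v hu hv
    rw [abs_le]
    constructor <;> nlinarith [hu.1, hu.2, hv.1, hv.2]
  by_cases hab : a = b
  · rw [if_pos hab]
    have h1 : (0:ℝ) ≤ if a = ν then (0:ℝ) else δ ^ (1 / (2 * |a - ν|)) := by
      split
      · exact le_refl 0
      · positivity
    have h2 : (0:ℝ) ≤ if b = ν then (0:ℝ) else δ ^ (1 / (2 * |b - ν|)) := by
      split
      · exact le_refl 0
      · positivity
    linarith
  · rw [if_neg hab]
    have habpos : 0 < |a - b| := abs_pos.2 (sub_ne_zero.2 hab)
    by_cases haν : a = ν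
    · subst haν
      rw [if_pos rfl, if_neg (fun e : b = a => hab e.symm)]
      have ht : 0 < |b - a| := abs_pos.2 (sub_ne_zero.2 fun e => hab e.symm)
      have habba : |a - b| = |b - a| := abs_sub_comm a b
      have hsplit : (1:ℝ) / |b - a| = 1/(2*|b-a|) + 1/(2*|b-a|) := by
        field_simp; ring
      rw [habba, hsplit, Real.rpow_add hδ0]
      have hb2 := hhalf |b - a| ht (habs b a hb ha)
      have hpos : (0:ℝ) ≤ δ ^ (1/(2*|b-a|)) := Real.rpow_nonneg hδ0.le _
      nlinarith
    · rw [if_neg haν]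
      by_cases hbν : b = ν
      · subst hbν
        rw [if_pos rfl]
        have ht : 0 < |a - b| := habpos
        have hsplit : (1:ℝ) / |a - b| = 1/(2*|a-b|) + 1/(2*|a-b|) := by
          field_simp; ring
        rw [hsplit, Real.rpow_add hδ0]
        have hb2 := hhalf |a - b| ht (habs a b ha hb)
        have hpos : (0:ℝ) ≤ δ ^ (1/(2*|a-b|)) := Real.rpow_nonneg hδ0.le _
        nlinarith
      · rw [if_neg hbν]
        set s := |a - ν| with hs
        set t := |b - ν| with ht
        have hs0 : 0 < s := abs_pos.2 (sub_ne_zero.2 haν)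
        have ht0 : 0 < t := abs_pos.2 (sub_ne_zero.2 hbν)
        have hspp : s ≤ pp := habs a ν ha hν
        have htpp : t ≤ pp := habs b ν hb hν
        have htri : |a - b| ≤ s + t := by
          calc |a - b| ≤ |a - ν| + |ν - b| := abs_sub_le a ν b
          _ = s + t := by rw [abs_sub_comm ν b]
        have step1 : δ ^ (1 / |a - b|) ≤ δ ^ (1 / (s + t)) := by
          apply Real.rpow_le_rpow_of_exponent_ge hδ0 hδ1
          exact one_div_le_one_div_of_le habpos htri
        have h2s : 2*s ∈ Ioc (0:ℝ) (c/2) := ⟨by linarith, by linarith⟩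
        have h2t : 2*t ∈ Ioc (0:ℝ) (c/2) := ⟨by linarith, by linarith⟩
        have hmid := (convexAux hc0).2 h2s h2t (by norm_num : (0:ℝ) ≤ 1/2)
          (by norm_num : (0:ℝ) ≤ 1/2) (by norm_num)
        simp only [smul_eq_mul] at hmid
        have harg : (1/2:ℝ) * (2*s) + (1/2) * (2*t) = s + t := by ring
        rw [harg] at hmid
        have e1 : δ ^ (1 / (s + t)) = Real.exp (-(c/(s+t))) := by
          rw [hrpow, mul_one_div]
        have e2 : δ ^ (1 / (2*s)) = Real.exp (-(c/(2*s))) := by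
          rw [hrpow, mul_one_div]
        have e3 : δ ^ (1 / (2*t)) = Real.exp (-(c/(2*t))) := by
          rw [hrpow, mul_one_div]
        calc δ ^ (1 / |a - b|) ≤ δ ^ (1 / (s + t)) := step1
        _ = Real.exp (-(c/(s+t))) := e1
        _ ≤ 1/2 * Real.exp (-(c/(2*s))) + 1/2 * Real.exp (-(c/(2*t))) := hmid
        _ = (δ ^ (1/(2*s)) + δ ^ (1/(2*t))) / 2 := by rw [e2, e3]; ring

lemma cube_volume (n : ℕ) (a0 : Fin n → ℝ) (h : ℝ) (hh : 0 < h) :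
    volume (cube n a0 h) = ENNReal.ofReal (h ^ n) := by
  rw [cube, volume_pi_pi]
  simp [Real.volume_Ioo, ← ENNReal.ofReal_pow hh.le]

lemma main_bound {n : ℕ} (p : (Fin n → ℝ) → ℝ) (hpmeas : Measurable p)
    (pm pp : ℝ) (hpm : 0 < pm) (hbounds : ∀ x, pm ≤ p x ∧ p x ≤ pp)
    (δ : ℝ) (hδ0 : 0 < δ) (hδ : δ ≤ Real.exp (-8 * pp))
    (a0 : Fin n → ℝ) (h : ℝ) (hh : 0 < h) (ν : ℝ) (hν : ν ∈ Icc pm pp) :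
    (∫ x in cube n a0 h, ∫ y in cube n a0 h,
        (if p x = p y then 0 else δ ^ (1 / |p x - p y|))) ≤
      h ^ n * ∫ x in cube n a0 h, (if p x = ν then 0 else δ ^ (1 / (2 * |p x - ν|))) := by
  have hpmpp : pm ≤ pp := le_trans (hbounds (fun _ => 0)).1 (hbounds (fun _ => 0)).2
  have hpp : 0 < pp := lt_of_lt_of_le hpm hpmpp
  have hδ1 : δ ≤ 1 := hδ.trans (by
    rw [← Real.exp_zero]
    exact Real.exp_le_exp.2 (by nlinarith))
  set Q := cube n a0 h with hQdef
  have hVol : volume Q = ENNReal.ofReal (h ^ n) := cube_volume n a0 h hh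
  have hQtop : volume Q ≠ ⊤ := by rw [hVol]; exact ENNReal.ofReal_ne_top
  have hQlt : volume Q < ⊤ := lt_of_le_of_ne le_top hQtop
  set g : (Fin n → ℝ) → ℝ := fun x => if p x = ν then 0 else δ ^ (1 / (2 * |p x - ν|))
    with hgdef
  have hg_meas : Measurable g := by
    have h1 : Measurable fun x : Fin n → ℝ => δ ^ (1 / (2 * |p x - ν|)) := by
      have he : (fun x : Fin n → ℝ => δ ^ (1 / (2 * |p x - ν|)))
          = fun x => Real.exp (Real.log δ * (1 / (2 * |p x - ν|))) := by
        funext x; rw [Real.rpow_def_of_pos hδ0]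
      rw [he]
      exact Real.measurable_exp.comp (measurable_const.mul
        (measurable_const.div ((measurable_const.mul (hpmeas.sub measurable_const).abs))))
    exact Measurable.ite (hpmeas (measurableSet_singleton ν)) measurable_const h1
  have hg0 : ∀ x, 0 ≤ g x := by
    intro x
    simp only [hgdef]
    split
    · exact le_refl 0
    · positivity
  have hg1 : ∀ x, g x ≤ 1 := by
    intro x
    simp only [hgdef]
    split
    · norm_num
    · apply Real.rpow_le_one hδ0.le hδ1
      positivity
  have hg_int : IntegrableOn g Q := by
    have hconst : IntegrableOn (fun _ : Fin n → ℝ => (1:ℝ)) Q :=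
      integrableOn_const hQtop
    refine hconst.mono' hg_meas.aestronglyMeasurable (ae_of_all _ fun x => ?_)
    rw [Real.norm_eq_abs, abs_of_nonneg (hg0 x)]
    exact hg1 x
  set I : ℝ := ∫ x in Q, g x with hIdef
  set V : ℝ := (volume Q).toReal with hVdef
  have hV : V = h ^ n := by
    rw [hVdef, hVol, ENNReal.toReal_ofReal (by positivity)]
  have hFnn : ∀ x y : Fin n → ℝ,
      (0:ℝ) ≤ if p x = p y then 0 else δ ^ (1 / |p x - p y|) := by
    intro x y
    split
    · exact le_refl 0
    · positivity
  have hkey : ∀ x y : Fin n → ℝ,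
      (if p x = p y then (0:ℝ) else δ ^ (1 / |p x - p y|)) ≤ (g x + g y) / 2 := by
    intro x y
    exact key_ineq hδ0 hpm hpmpp hδ ⟨(hbounds x).1, (hbounds x).2⟩
      ⟨(hbounds y).1, (hbounds y).2⟩ hν
  have hconstgx : ∀ x : Fin n → ℝ, IntegrableOn (fun _ : Fin n → ℝ => g x) Q :=
    fun x => integrableOn_const hQtop
  have hinner : ∀ x : Fin n → ℝ,
      (∫ y in Q, (if p x = p y then 0 else δ ^ (1 / |p x - p y|))) ≤ (V * g x + I) / 2 := by
    intro x
    have step : (∫ y in Q, (if p x = p y then 0 else δ ^ (1 / |p x - p y|)))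
        ≤ ∫ y in Q, (g x + g y) / 2 := by
      refine integral_mono_of_nonneg (ae_of_all _ fun y => hFnn x y)
        (((hconstgx x).add hg_int).div_const 2) (ae_of_all _ fun y => hkey x y)
    refine step.trans_eq ?_
    rw [integral_div, integral_add (hconstgx x) hg_int, setIntegral_const, smul_eq_mul, measureReal_def]
  have houter : (∫ x in Q, ∫ y in Q, (if p x = p y then 0 else δ ^ (1 / |p x - p y|)))
      ≤ ∫ x in Q, (V * g x + I) / 2 := by
    refine integral_mono_of_nonneg (ae_of_all _ fun x => ?_)
      (((hg_int.const_mul V).add (integrableOn_const hQtop)).div_const 2)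
      (ae_of_all _ fun x => hinner x)
    exact integral_nonneg fun y => hFnn x y
  refine houter.trans_eq ?_
  rw [integral_div, integral_add (hg_int.const_mul V) (integrableOn_const hQtop),
    integral_const_mul, setIntegral_const, smul_eq_mul, measureReal_def, ← hIdef, ← hVdef, hV]
  ring

theorem stmt_15 {n : ℕ} (p : (Fin n → ℝ) → ℝ) (hpmeas : Measurable p)
    (pm pp : ℝ) (hpm : 0 < pm) (hbounds : ∀ x, pm ≤ p x ∧ p x ≤ pp)
    (δ : ℝ) (hδ0 : 0 < δ) (hδ : δ ≤ Real.exp (-8 * pp))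
    (a0 : Fin n → ℝ) (h : ℝ) (hh : 0 < h) :
    (∫ x in cube n a0 h, ∫ y in cube n a0 h,
        (if p x = p y then 0 else δ ^ (1 / |p x - p y|))) ≤
      h ^ n * ⨅ ν : Icc pm pp,
        ∫ x in cube n a0 h,
          (if p x = (ν : ℝ) then 0 else δ ^ (1 / (2 * |p x - (ν : ℝ)|))) := by
  have hpmpp : pm ≤ pp := le_trans (hbounds (fun _ => 0)).1 (hbounds (fun _ => 0)).2
  haveI : Nonempty (Icc pm pp) := ⟨⟨pm, left_mem_Icc.2 hpmpp⟩⟩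
  have hpow : (0:ℝ) < h ^ n := pow_pos hh n
  rw [mul_comm, ← div_le_iff₀ hpow]
  refine le_ciInf fun ν => ?_
  rw [div_le_iff₀ hpow]
  exact (main_bound p hpmeas pm pp hpm hbounds δ hδ0 hδ a0 h hh (ν : ℝ) ν.2).trans_eq
    (mul_comm _ _)
end

section
/- Let Q ⊂ ℝ^n be a cube, p measurable with 1 < p_- ≤ p_+ < ∞, and λ, τ ∈ (0,1). Define F(x,y) := (τ^{p(y)} λ^{p(x)(p(y)-1)})^{1/(p(x)-p(y))} if p(x) > p(y) and F(x,y) := 0 otherwise. Then for almost all t, s ∈ (0,1), the iterated rearrangement satisfies (Fχ_{Q×Q})^*(t|Q|, s|Q|) = τ^{Ψ_{Q,p}(t,s)} λ^{Ψ_{Q,p'}(s,t)} when t + s < 1 (interpreted as 0 when (pχ_Q)^*(t|Q|) = (pχ_Q)^*((1-s)|Q|)), and equals 0 when t + s ≥ 1. -/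
open MeasureTheory Set

/-- Iterated non-increasing rearrangement of a function of two variables restricted to `A × B`. -/
noncomputable def rearr2On {α β : Type*} [MeasureSpace α] [MeasureSpace β]
    (A : Set α) (B : Set β) (f : α × β → ℝ) (t s : ℝ) : ℝ :=
  rearrOn B (fun y => rearrOn A (fun x => f (x, y)) t) s

/-- The Hölder conjugate `t ↦ t/(t-1)`. -/
noncomputable def conjExp (t : ℝ) : ℝ := t / (t - 1)

/-- `Ψ_{Q,p}(t,s) = (pχ_Q)^*((1-s)|Q|) / ((pχ_Q)^*(t|Q|) - (pχ_Q)^*((1-s)|Q|))`. -/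
noncomputable def Psi {n : ℕ} (Q : Set (Fin n → ℝ)) (p : (Fin n → ℝ) → ℝ)
    (sz t s : ℝ) : ℝ :=
  rearrOn Q p ((1 - s) * sz) / (rearrOn Q p (t * sz) - rearrOn Q p ((1 - s) * sz))

noncomputable def incRe {α : Type*} [MeasureSpace α] (E : Set α) (g : α → ℝ) (t : ℝ) : ℝ :=
  sSup {c : ℝ | volume {x ∈ E | g x < c} ≤ ENNReal.ofReal t}

section Generic

variable {X : Type*} [MeasureSpace X] {E : Set X} {g : X → ℝ} {pm pp : ℝ} {t : ℝ}

lemma rearrOn_eq_sInf (hpos : ∀ x, 0 < g x) :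
    rearrOn E g t = sInf {a : ℝ | 0 < a ∧ volume {x ∈ E | a < g x} ≤ ENNReal.ofReal t} := by
  unfold rearrOn
  congr 1
  ext a
  simp only [mem_setOf_eq, abs_of_pos (hpos _)]

variable (hg : ∀ x, pm ≤ g x ∧ g x ≤ pp) (hpm : 0 < pm) (hle : pm ≤ pp)
  (ht0 : 0 < t) (htE : ENNReal.ofReal t < volume E)

section
include hg hpm hle

lemma pp_mem_S : pp ∈ {a : ℝ | 0 < a ∧ volume {x ∈ E | a < g x} ≤ ENNReal.ofReal t} := by
  refine ⟨lt_of_lt_of_le hpm hle, ?_⟩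
  have : {x ∈ E | pp < g x} = ∅ := by
    ext x; simp only [mem_setOf_eq, mem_empty_iff_false, iff_false]
    rintro ⟨-, hx⟩; exact absurd hx (not_lt.2 (hg x).2)
  simp [this]

include htE in
lemma S_mem_ge (a : ℝ) (ha : a ∈ {a : ℝ | 0 < a ∧ volume {x ∈ E | a < g x} ≤ ENNReal.ofReal t}) :
    pm ≤ a := by
  by_contra hlt
  push_neg at hlt
  have hEeq : {x ∈ E | a < g x} = E := by
    ext x; simp only [mem_setOf_eq]
    exact ⟨fun h => h.1, fun h => ⟨h, lt_of_lt_of_le hlt (hg x).1⟩⟩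
  obtain ⟨-, ha2⟩ := ha
  rw [hEeq] at ha2
  exact absurd (lt_of_lt_of_le htE ha2) (lt_irrefl _)

include htE in
lemma rearr_mem_Icc : rearrOn E g t ∈ Icc pm pp := by
  rw [rearrOn_eq_sInf (fun x => lt_of_lt_of_le hpm (hg x).1)]
  constructor
  · exact le_csInf ⟨pp, pp_mem_S hg hpm hle⟩ (fun a ha => S_mem_ge hg hpm hle htE a ha)
  · exact csInf_le ⟨pm, fun a ha => S_mem_ge hg hpm hle htE a ha⟩ (pp_mem_S hg hpm hle)

include htE in
lemma D_rearr_le :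
    volume {x ∈ E | rearrOn E g t < g x} ≤ ENNReal.ofReal t := by
  set S := {a : ℝ | 0 < a ∧ volume {x ∈ E | a < g x} ≤ ENNReal.ofReal t} with hS
  set β := rearrOn E g t with hβ'
  have hβ : β = sInf S := rearrOn_eq_sInf (fun x => lt_of_lt_of_le hpm (hg x).1)
  have hSne : S.Nonempty := ⟨pp, pp_mem_S hg hpm hle⟩
  have hSbd : BddBelow S := ⟨pm, fun a ha => S_mem_ge hg hpm hle htE a ha⟩
  have hcover : {x ∈ E | β < g x} = ⋃ k : ℕ, {x ∈ E | β + (k+1:ℝ)⁻¹ < g x} := by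
    ext x
    simp only [mem_setOf_eq, mem_iUnion]
    constructor
    · rintro ⟨hxE, hx⟩
      obtain ⟨k, hk⟩ := exists_nat_one_div_lt (sub_pos.2 hx)
      exact ⟨k, hxE, by rw [one_div] at hk; linarith⟩
    · rintro ⟨k, hxE, hx⟩
      have : (0:ℝ) < (k+1:ℝ)⁻¹ := by positivity
      exact ⟨hxE, by linarith⟩
  rw [hcover]
  have hdir : Directed (· ⊆ ·) (fun k : ℕ => {x ∈ E | β + (k+1:ℝ)⁻¹ < g x}) := by
    apply Monotone.directed_le
    intro i j hij x hx
    refine ⟨hx.1, lt_of_le_of_lt ?_ hx.2⟩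
    have : ((j:ℝ)+1)⁻¹ ≤ ((i:ℝ)+1)⁻¹ := by
      apply inv_anti₀ (by positivity)
      exact_mod_cast by omega
    linarith
  rw [hdir.measure_iUnion]
  refine iSup_le fun k => ?_
  have hex : ∃ a ∈ S, a < β + (k+1:ℝ)⁻¹ := by
    apply exists_lt_of_csInf_lt hSne
    rw [← hβ]
    have : (0:ℝ) < (k+1:ℝ)⁻¹ := by positivity
    linarith
  obtain ⟨a, haS, ha⟩ := hex
  refine le_trans (measure_mono ?_) haS.2
  intro x hx
  exact ⟨hx.1, lt_trans ha hx.2⟩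

include htE in
lemma D_gt_of_lt (c : ℝ) (hc0 : 0 < c) (hcβ : c < rearrOn E g t) :
    ENNReal.ofReal t < volume {x ∈ E | c < g x} := by
  by_contra hcon
  push_neg at hcon
  have : rearrOn E g t ≤ c := by
    rw [rearrOn_eq_sInf (fun x => lt_of_lt_of_le hpm (hg x).1)]
    exact csInf_le ⟨pm, fun a ha => S_mem_ge hg hpm hle htE a ha⟩ ⟨hc0, hcon⟩
  linarith

-- dual versions
lemma pm_mem_S' : pm ∈ {c : ℝ | volume {x ∈ E | g x < c} ≤ ENNReal.ofReal t} := by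
  have : {x ∈ E | g x < pm} = ∅ := by
    ext x; simp only [mem_setOf_eq, mem_empty_iff_false, iff_false]
    rintro ⟨-, hx⟩; exact absurd hx (not_lt.2 (hg x).1)
  simp [this]

include htE in
lemma S'_mem_le (c : ℝ) (hc : c ∈ {c : ℝ | volume {x ∈ E | g x < c} ≤ ENNReal.ofReal t}) :
    c ≤ pp := by
  by_contra hlt
  push_neg at hlt
  have hEeq : {x ∈ E | g x < c} = E := by
    ext x; simp only [mem_setOf_eq]
    exact ⟨fun h => h.1, fun h => ⟨h, lt_of_le_of_lt (hg x).2 hlt⟩⟩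
  rw [mem_setOf_eq, hEeq] at hc
  exact absurd (lt_of_lt_of_le htE hc) (lt_irrefl _)

include htE in
lemma incRe_mem_Icc : incRe E g t ∈ Icc pm pp := by
  constructor
  · exact le_csSup ⟨pp, fun c hc => S'_mem_le hg hpm hle htE c hc⟩ (pm_mem_S' hg hpm hle)
  · exact csSup_le ⟨pm, pm_mem_S' hg hpm hle⟩ (fun c hc => S'_mem_le hg hpm hle htE c hc)

include htE in
lemma Dlt_incRe_le :
    volume {x ∈ E | g x < incRe E g t} ≤ ENNReal.ofReal t := by
  set S := {c : ℝ | volume {x ∈ E | g x < c} ≤ ENNReal.ofReal t} with hS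
  set α := incRe E g t with hα'
  have hα : α = sSup S := rfl
  have hSne : S.Nonempty := ⟨pm, pm_mem_S' hg hpm hle⟩
  have hSbd : BddAbove S := ⟨pp, fun c hc => S'_mem_le hg hpm hle htE c hc⟩
  have hcover : {x ∈ E | g x < α} = ⋃ k : ℕ, {x ∈ E | g x < α - (k+1:ℝ)⁻¹} := by
    ext x
    simp only [mem_setOf_eq, mem_iUnion]
    constructor
    · rintro ⟨hxE, hx⟩
      obtain ⟨k, hk⟩ := exists_nat_one_div_lt (sub_pos.2 hx)
      exact ⟨k, hxE, by rw [one_div] at hk; linarith⟩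
    · rintro ⟨k, hxE, hx⟩
      have : (0:ℝ) < (k+1:ℝ)⁻¹ := by positivity
      exact ⟨hxE, by linarith⟩
  show volume {x ∈ E | g x < α} ≤ _
  rw [hcover]
  have hdir : Directed (· ⊆ ·) (fun k : ℕ => {x ∈ E | g x < α - (k+1:ℝ)⁻¹}) := by
    apply Monotone.directed_le
    intro i j hij x hx
    refine ⟨hx.1, lt_of_lt_of_le hx.2 ?_⟩
    have : ((j:ℝ)+1)⁻¹ ≤ ((i:ℝ)+1)⁻¹ := by
      apply inv_anti₀ (by positivity)
      exact_mod_cast by omega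
    linarith
  rw [hdir.measure_iUnion]
  refine iSup_le fun k => ?_
  have hex : ∃ c ∈ S, α - (k+1:ℝ)⁻¹ < c := by
    apply exists_lt_of_lt_csSup hSne
    rw [hα]  -- need α - inv < sSup S
    rw [← hα]
    have : (0:ℝ) < (k+1:ℝ)⁻¹ := by positivity
    linarith
  obtain ⟨c, hcS, hc⟩ := hex
  refine le_trans (measure_mono ?_) hcS
  intro x hx
  exact ⟨hx.1, lt_trans hx.2 hc⟩

include htE in
lemma Dlt_gt_of_gt (c : ℝ) (hcα : incRe E g t < c) :
    ENNReal.ofReal t < volume {x ∈ E | g x < c} := by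
  by_contra hcon
  push_neg at hcon
  have : c ≤ incRe E g t :=
    le_csSup ⟨pp, fun a ha => S'_mem_le hg hpm hle htE a ha⟩ hcon
  linarith

end

section
include hg hpm hle

lemma rearr_anti {t1 t2 : ℝ} (h12 : t1 ≤ t2) : rearrOn E g t2 ≤ rearrOn E g t1 := by
  rw [rearrOn_eq_sInf (fun x => lt_of_lt_of_le hpm (hg x).1),
      rearrOn_eq_sInf (fun x => lt_of_lt_of_le hpm (hg x).1)]
  apply csInf_le_csInf
  · exact ⟨0, fun a ha => le_of_lt ha.1⟩
  · exact ⟨pp, pp_mem_S hg hpm hle⟩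
  · rintro a ⟨ha0, ha⟩
    exact ⟨ha0, le_trans ha (ENNReal.ofReal_le_ofReal h12)⟩

include ht0 htE in
lemma rearrOn_comp_mono (φ : ℝ → ℝ)
    (hφ0 : ∀ r, pm ≤ r → r ≤ pp → 0 ≤ φ r)
    (hmono : ∀ r1 r2, pm ≤ r1 → r1 ≤ r2 → r2 ≤ pp → φ r1 ≤ φ r2)
    (Hc : ∀ β, pm ≤ β → β ≤ pp → ∀ a, 0 < a → a < φ β →
      ∃ b, 0 < b ∧ b < β ∧ ∀ r, b < r → r ≤ pp → a < φ r) :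
    rearrOn E (fun x => φ (g x)) t = φ (rearrOn E g t) := by
  set β := rearrOn E g t with hβ
  obtain ⟨hβ1, hβ2⟩ := rearr_mem_Icc hg hpm hle htE (t := t)
  have hφβ0 : 0 ≤ φ β := hφ0 _ hβ1 hβ2
  have habs : ∀ x : X, |φ (g x)| = φ (g x) := fun x =>
    abs_of_nonneg (hφ0 _ (hg x).1 (hg x).2)
  have key1 : ∀ a, φ β < a →
      a ∈ {a : ℝ | 0 < a ∧ volume {x ∈ E | a < |φ (g x)|} ≤ ENNReal.ofReal t} := by
    intro a ha
    refine ⟨lt_of_le_of_lt hφβ0 ha, ?_⟩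
    refine le_trans (measure_mono ?_) (D_rearr_le hg hpm hle htE)
    rintro x ⟨hxE, hx⟩
    rw [habs] at hx
    refine ⟨hxE, ?_⟩
    by_contra hc
    push_neg at hc
    have h1 : φ (g x) ≤ φ β := hmono _ _ (hg x).1 hc hβ2
    linarith
  have key2 : ∀ a ∈ {a : ℝ | 0 < a ∧ volume {x ∈ E | a < |φ (g x)|} ≤ ENNReal.ofReal t},
      φ β ≤ a := by
    rintro a ⟨ha0, haD⟩
    by_contra hc
    push_neg at hc
    obtain ⟨b, hb0, hbβ, hb⟩ := Hc β hβ1 hβ2 a ha0 hc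
    have hsub : {x ∈ E | b < g x} ⊆ {x ∈ E | a < |φ (g x)|} := by
      rintro x ⟨hxE, hx⟩
      exact ⟨hxE, by rw [habs]; exact hb _ hx (hg x).2⟩
    have := D_gt_of_lt hg hpm hle htE b hb0 hbβ
    exact absurd (le_trans (measure_mono hsub) haD) (not_le.2 this)
  show sInf _ = φ β
  apply le_antisymm
  · by_contra hcon
    push_neg at hcon
    have hmem := key1 ((φ β + sInf {a : ℝ | 0 < a ∧
        volume {x ∈ E | a < |φ (g x)|} ≤ ENNReal.ofReal t}) / 2) (by linarith)
    have := csInf_le ⟨φ β, key2⟩ hmem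
    linarith
  · exact le_csInf ⟨φ β + 1, key1 _ (lt_add_one _)⟩ key2

include ht0 htE in
lemma rearrOn_comp_anti (ψ : ℝ → ℝ)
    (hψ0 : ∀ r, pm ≤ r → r ≤ pp → 0 ≤ ψ r)
    (hanti : ∀ r1 r2, pm ≤ r1 → r1 ≤ r2 → r2 ≤ pp → ψ r2 ≤ ψ r1)
    (Hc : ∀ α, pm ≤ α → α ≤ pp → ∀ a, 0 < a → a < ψ α →
      ∃ b, α < b ∧ ∀ r, pm ≤ r → r < b → a < ψ r) :
    rearrOn E (fun x => ψ (g x)) t = ψ (incRe E g t) := by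
  set α := incRe E g t with hα
  obtain ⟨hα1, hα2⟩ := incRe_mem_Icc hg hpm hle htE (t := t)
  have hψα0 : 0 ≤ ψ α := hψ0 _ hα1 hα2
  have habs : ∀ x : X, |ψ (g x)| = ψ (g x) := fun x =>
    abs_of_nonneg (hψ0 _ (hg x).1 (hg x).2)
  have key1 : ∀ a, ψ α < a →
      a ∈ {a : ℝ | 0 < a ∧ volume {x ∈ E | a < |ψ (g x)|} ≤ ENNReal.ofReal t} := by
    intro a ha
    refine ⟨lt_of_le_of_lt hψα0 ha, ?_⟩
    refine le_trans (measure_mono ?_) (Dlt_incRe_le hg hpm hle htE)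
    rintro x ⟨hxE, hx⟩
    rw [habs] at hx
    refine ⟨hxE, ?_⟩
    by_contra hcge
    push_neg at hcge
    have : ψ (g x) ≤ ψ α := hanti _ _ hα1 hcge (hg x).2
    linarith
  have key2 : ∀ a ∈ {a : ℝ | 0 < a ∧ volume {x ∈ E | a < |ψ (g x)|} ≤ ENNReal.ofReal t},
      ψ α ≤ a := by
    rintro a ⟨ha0, haD⟩
    by_contra hc
    push_neg at hc
    obtain ⟨b, hbα, hb⟩ := Hc α hα1 hα2 a ha0 hc
    have hsub : {x ∈ E | g x < b} ⊆ {x ∈ E | a < |ψ (g x)|} := by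
      rintro x ⟨hxE, hx⟩
      exact ⟨hxE, by rw [habs]; exact hb _ (hg x).1 hx⟩
    have := Dlt_gt_of_gt hg hpm hle htE b hbα
    exact absurd (le_trans (measure_mono hsub) haD) (not_le.2 this)
  show sInf _ = ψ α
  apply le_antisymm
  · by_contra hcon
    push_neg at hcon
    have hmem := key1 ((ψ α + sInf {a : ℝ | 0 < a ∧
        volume {x ∈ E | a < |ψ (g x)|} ≤ ENNReal.ofReal t}) / 2) (by linarith)
    have := csInf_le ⟨ψ α, key2⟩ hmem
    linarith
  · exact le_csInf ⟨ψ α + 1, key1 _ (lt_add_one _)⟩ key2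

end

section Reflection

variable (hE : MeasurableSet E) (hgm : Measurable g)
  (hg : ∀ x, pm ≤ g x ∧ g x ≤ pp) (hpm : 0 < pm) (hle : pm ≤ pp)
  {V : ℝ} (hV : 0 < V) (hvol : volume E = ENNReal.ofReal V)

include hE hgm hg hpm hle hV hvol

lemma claim1 {s : ℝ} (hs : s ∈ Ioo (0:ℝ) 1) :
    rearrOn E g ((1-s)*V) ≤ incRe E g (s*V) := by
  obtain ⟨hs0, hs1⟩ := hs
  have hts0 : (0:ℝ) < s*V := by positivity
  have hts1 : ENNReal.ofReal (s*V) < volume E := by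
    rw [hvol]; exact ENNReal.ofReal_lt_ofReal_iff hV |>.2 (by nlinarith)
  have htt0 : (0:ℝ) < (1-s)*V := by nlinarith
  have htt1 : ENNReal.ofReal ((1-s)*V) < volume E := by
    rw [hvol]; exact ENNReal.ofReal_lt_ofReal_iff hV |>.2 (by nlinarith)
  by_contra hcon
  push_neg at hcon
  set c := (incRe E g (s*V) + rearrOn E g ((1-s)*V)) / 2 with hc
  have hαc : incRe E g (s*V) < c := by rw [hc]; linarith
  have hcβ : c < rearrOn E g ((1-s)*V) := by rw [hc]; linarith
  have hc0 : 0 < c := by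
    have := (incRe_mem_Icc hg hpm hle hts1 (t := s*V)).1
    rw [hc]; linarith
  have h1 := Dlt_gt_of_gt hg hpm hle hts1 c hαc
  have h2 := D_gt_of_lt hg hpm hle htt1 c hc0 hcβ
  have hdisj : Disjoint {x ∈ E | g x < c} {x ∈ E | c < g x} := by
    rw [Set.disjoint_left]
    rintro x ⟨-, h1x⟩ ⟨-, h2x⟩
    linarith
  have hm1 : MeasurableSet {x ∈ E | g x < c} := by
    have : {x ∈ E | g x < c} = E ∩ g ⁻¹' (Iio c) := rfl
    rw [this]; exact hE.inter (hgm measurableSet_Iio)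
  have hm2 : MeasurableSet {x ∈ E | c < g x} := by
    have : {x ∈ E | c < g x} = E ∩ g ⁻¹' (Ioi c) := rfl
    rw [this]; exact hE.inter (hgm measurableSet_Ioi)
  have hsub : {x ∈ E | g x < c} ∪ {x ∈ E | c < g x} ⊆ E := by
    rintro x (⟨hx, -⟩ | ⟨hx, -⟩) <;> exact hx
  have hsum : volume {x ∈ E | g x < c} + volume {x ∈ E | c < g x} ≤ volume E := by
    rw [← measure_union hdisj hm2]
    exact measure_mono hsub
  have hlt : ENNReal.ofReal V < volume {x ∈ E | g x < c} + volume {x ∈ E | c < g x} := by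
    have : ENNReal.ofReal V = ENNReal.ofReal (s*V) + ENNReal.ofReal ((1-s)*V) := by
      rw [← ENNReal.ofReal_add (le_of_lt hts0) (le_of_lt htt0)]
      ring_nf
    rw [this]
    exact ENNReal.add_lt_add h1 h2
  rw [hvol] at hsum
  exact absurd (lt_of_lt_of_le hlt hsum) (lt_irrefl _)

lemma claim2 {s s' : ℝ} (hs : s ∈ Ioo (0:ℝ) 1) (hs' : s' ∈ Ioo (0:ℝ) 1) (hss : s < s') :
    incRe E g (s*V) ≤ rearrOn E g ((1-s')*V) := by
  obtain ⟨hs0, hs1⟩ := hs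
  obtain ⟨hs'0, hs'1⟩ := hs'
  have hts1 : ENNReal.ofReal (s*V) < volume E := by
    rw [hvol]; exact ENNReal.ofReal_lt_ofReal_iff hV |>.2 (by nlinarith)
  have htt1 : ENNReal.ofReal ((1-s')*V) < volume E := by
    rw [hvol]; exact ENNReal.ofReal_lt_ofReal_iff hV |>.2 (by nlinarith)
  by_contra hcon
  push_neg at hcon
  set β := rearrOn E g ((1-s')*V) with hβ
  set α := incRe E g (s*V) with hα
  set c1 := β + (α - β)/3 with hc1
  set c2 := β + 2*(α - β)/3 with hc2
  have hβc1 : β < c1 := by rw [hc1]; linarith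
  have hc1c2 : c1 < c2 := by rw [hc1, hc2]; linarith
  have hc2α : c2 < α := by rw [hc2]; linarith
  have h1 : volume {x ∈ E | g x < c2} ≤ ENNReal.ofReal (s*V) := by
    refine le_trans (measure_mono ?_) (Dlt_incRe_le hg hpm hle hts1)
    rintro x ⟨hxE, hx⟩
    exact ⟨hxE, lt_trans hx hc2α⟩
  have h2 : volume {x ∈ E | c1 < g x} ≤ ENNReal.ofReal ((1-s')*V) := by
    refine le_trans (measure_mono ?_) (D_rearr_le hg hpm hle htt1)
    rintro x ⟨hxE, hx⟩
    exact ⟨hxE, lt_trans hβc1 hx⟩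
  have hcover : E ⊆ {x ∈ E | g x < c2} ∪ {x ∈ E | c1 < g x} := by
    intro x hx
    rcases lt_or_ge (g x) c2 with h | h
    · exact Or.inl ⟨hx, h⟩
    · exact Or.inr ⟨hx, lt_of_lt_of_le hc1c2 h⟩
  have hsum : volume E ≤ ENNReal.ofReal (s*V) + ENNReal.ofReal ((1-s')*V) :=
    le_trans (measure_mono hcover) (le_trans (measure_union_le _ _) (add_le_add h1 h2))
  rw [hvol, ← ENNReal.ofReal_add (by positivity) (by nlinarith)] at hsum
  have := (ENNReal.ofReal_le_ofReal_iff (by nlinarith)).1 hsum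
  nlinarith

lemma reflect_countable :
    {s ∈ Ioo (0:ℝ) 1 | incRe E g (s*V) ≠ rearrOn E g ((1-s)*V)}.Countable := by
  set B := {s ∈ Ioo (0:ℝ) 1 | incRe E g (s*V) ≠ rearrOn E g ((1-s)*V)} with hB
  have hsub : B ⊆ ⋃ q : ℚ, {s ∈ Ioo (0:ℝ) 1 |
      rearrOn E g ((1-s)*V) < q ∧ (q:ℝ) < incRe E g (s*V)} := by
    rintro s ⟨hsI, hsne⟩
    have hlt : rearrOn E g ((1-s)*V) < incRe E g (s*V) :=
      lt_of_le_of_ne (claim1 hg hpm hle hE hgm hV hvol hsI) (Ne.symm hsne)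
    obtain ⟨q, hq1, hq2⟩ := exists_rat_btwn hlt
    exact mem_iUnion.2 ⟨q, hsI, hq1, hq2⟩
  refine Set.Countable.mono hsub (Set.countable_iUnion fun q => ?_)
  apply Set.Subsingleton.countable
  rintro s ⟨hsI, hs1, hs2⟩ s' ⟨hs'I, hs'1, hs'2⟩
  by_contra hne
  rcases lt_or_gt_of_ne hne with hlt | hlt
  · have := claim2 hg hpm hle hE hgm hV hvol hsI hs'I hlt
    linarith
  · have := claim2 hg hpm hle hE hgm hV hvol hs'I hsI hlt
    linarith

end Reflection
end Generic

noncomputable def Phi (lam τ r q : ℝ) : ℝ :=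
  if q < r then (τ ^ q * lam ^ (r * (q - 1))) ^ (1 / (r - q)) else 0

section PhiLemmas

variable {lam τ : ℝ} (hlam : lam ∈ Ioo (0:ℝ) 1) (hτ : τ ∈ Ioo (0:ℝ) 1)

include hlam hτ

lemma Phi_nonneg (r q : ℝ) : 0 ≤ Phi lam τ r q := by
  have h1 := hlam.1
  have h2 := hτ.1
  unfold Phi
  split
  · apply Real.rpow_nonneg
    positivity
  · exact le_refl 0

lemma c_mem {q : ℝ} (hq : 1 < q) : 0 < τ * lam ^ (q - 1) ∧ τ * lam ^ (q - 1) < 1 := by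
  have h1 : (0:ℝ) < lam ^ (q - 1) := Real.rpow_pos_of_pos hlam.1 _
  have h2 : lam ^ (q - 1) ≤ 1 :=
    Real.rpow_le_one hlam.1.le hlam.2.le (by linarith)
  constructor
  · have hτ0 := hτ.1
    positivity
  · calc τ * lam ^ (q - 1) ≤ τ * 1 := mul_le_mul_of_nonneg_left h2 hτ.1.le
      _ < 1 := by rw [mul_one]; exact hτ.2

lemma Phi_eq {r q : ℝ} (hq1 : 1 < q) (hq : q < r) :
    Phi lam τ r q = lam ^ (q - 1) * (τ * lam ^ (q - 1)) ^ (q / (r - q)) := by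
  unfold Phi
  rw [if_pos hq]
  have hτ0 := hτ.1
  have hlam0 := hlam.1
  have hrq : r - q ≠ 0 := by linarith
  rw [Real.mul_rpow (by positivity) (by positivity),
      Real.mul_rpow (by positivity) (by positivity),
      ← Real.rpow_mul hτ0.le, ← Real.rpow_mul hlam0.le]
  have e1 : q * (1/(r - q)) = q/(r - q) := by field_simp
  have e2 : r*(q - 1)*(1/(r - q)) = (q - 1) + (q - 1)*(q/(r - q)) := by
    field_simp
    ring
  rw [e1, e2, Real.rpow_add hlam0, ← Real.rpow_mul hlam0.le]
  ring

lemma Phi_eq2 {R q : ℝ} (hR1 : 1 < R) (hq : q < R) :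
    Phi lam τ R q = (τ * lam ^ R)⁻¹ * (τ * lam ^ (R - 1)) ^ (R / (R - q)) := by
  unfold Phi
  rw [if_pos hq]
  have hτ0 := hτ.1
  have hlam0 := hlam.1
  have hlamR : (0:ℝ) < lam ^ R := Real.rpow_pos_of_pos hlam0 _
  have hlamR1 : (0:ℝ) < lam ^ (R - 1) := Real.rpow_pos_of_pos hlam0 _
  have hrq : (0:ℝ) < R - q := by linarith
  rw [Real.mul_rpow (by positivity) (by positivity),
      Real.mul_rpow (by positivity) (by positivity),
      ← Real.rpow_mul hτ0.le, ← Real.rpow_mul hlam0.le, ← Real.rpow_mul hlam0.le]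
  have hrq' : (0:ℝ) < R - q := hrq
  have e1 : q * (1/(R - q)) = R/(R - q) + (-1) := by
    field_simp
    ring
  have e2 : R*(q - 1)*(1/(R - q)) = (R - 1) * (R/(R - q)) + (-R) := by
    field_simp
    ring
  rw [e1, e2, Real.rpow_add hτ0, Real.rpow_add hlam0]
  rw [Real.rpow_neg_one, Real.rpow_neg hlam0.le]
  rw [mul_inv]
  ring

lemma Phi_mono_r {q : ℝ} (hq1 : 1 < q) : Monotone (fun r => Phi lam τ r q) := by
  intro r1 r2 h12
  simp only
  by_cases h1 : q < r1
  · have h2 : q < r2 := lt_of_lt_of_le h1 h12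
    rw [Phi_eq hlam hτ hq1 h1, Phi_eq hlam hτ hq1 h2]
    obtain ⟨hc0, hc1⟩ := c_mem hlam hτ hq1
    have hexp : q / (r2 - q) ≤ q / (r1 - q) := by
      apply div_le_div_of_nonneg_left (by linarith) (by linarith) (by linarith)
    have := Real.rpow_le_rpow_of_exponent_ge hc0 hc1.le hexp
    have hl : (0:ℝ) < lam ^ (q-1) := Real.rpow_pos_of_pos hlam.1 _
    nlinarith
  · have h0 : Phi lam τ r1 q = 0 := by unfold Phi; rw [if_neg h1]
    rw [h0]
    exact Phi_nonneg hlam hτ r2 q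

lemma Phi_Hc_r {q pp : ℝ} (hq1 : 1 < q) :
    ∀ β, 1 ≤ β → β ≤ pp → ∀ a, 0 < a → a < Phi lam τ β q →
      ∃ b, 0 < b ∧ b < β ∧ ∀ r, b < r → r ≤ pp → a < Phi lam τ r q := by
  intro β hβ1 hβ2 a ha0 haφ
  have hqβ : q < β := by
    by_contra hc
    push_neg at hc
    have : Phi lam τ β q = 0 := by unfold Phi; rw [if_neg (not_lt.2 hc)]
    rw [this] at haφ
    linarith
  obtain ⟨hc0, hc1⟩ := c_mem hlam hτ hq1
  set c := τ * lam ^ (q - 1) with hcdef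
  have hL0 : (0:ℝ) < lam ^ (q - 1) := Real.rpow_pos_of_pos hlam.1 _
  set L := lam ^ (q - 1) with hLdef
  set M := Real.logb c (a / L) with hMdef
  have hlog : c ^ M = a / L := Real.rpow_logb hc0 hc1.ne (div_pos ha0 hL0)
  have hiff : ∀ e : ℝ, a < L * c ^ e ↔ e < M := by
    intro e
    constructor
    · intro hh
      refine (Real.rpow_lt_rpow_left_iff_of_base_lt_one hc0 hc1).1 ?_
      rw [hlog, div_lt_iff₀ hL0]
      linarith [mul_comm L (c ^ e)]
    · intro hh
      have h' : c ^ M < c ^ e := (Real.rpow_lt_rpow_left_iff_of_base_lt_one hc0 hc1).2 hh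
      rw [hlog, div_lt_iff₀ hL0] at h'
      linarith [mul_comm (c ^ e) L]
  have hβM : q / (β - q) < M := by
    rw [← hiff, ← Phi_eq hlam hτ hq1 hqβ]
    exact haφ
  have hq0 : (0:ℝ) < q := by linarith
  have hβq0 : (0:ℝ) < β - q := by linarith
  have hM0 : (0:ℝ) < M := lt_trans (div_pos hq0 hβq0) hβM
  have hkey : q / M < β - q := by
    rw [div_lt_iff₀ hM0]
    rw [div_lt_iff₀ hβq0] at hβM
    nlinarith
  refine ⟨q + q / M, by positivity, by linarith, ?_⟩
  intro r hbr hrpp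
  have hqMpos : (0:ℝ) < q / M := by positivity
  have hqr : q < r := by linarith
  rw [Phi_eq hlam hτ hq1 hqr, hiff]
  have hrq0 : (0:ℝ) < r - q := by linarith
  rw [div_lt_iff₀ hrq0]
  have h1 : q / M < r - q := by linarith
  rw [div_lt_iff₀ hM0] at h1
  nlinarith

lemma Phi_anti_q {R pm pp : ℝ} (hR1 : 1 < R) (hpm : 1 < pm) :
    ∀ q1 q2, pm ≤ q1 → q1 ≤ q2 → q2 ≤ pp → Phi lam τ R q2 ≤ Phi lam τ R q1 := by
  intro q1 q2 hq1 h12 hq2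
  by_cases h2 : q2 < R
  · have h1 : q1 < R := lt_of_le_of_lt h12 h2
    rw [Phi_eq2 hlam hτ hR1 h1, Phi_eq2 hlam hτ hR1 h2]
    obtain ⟨hc0, hc1⟩ := c_mem hlam hτ hR1
    have hκ : (0:ℝ) < (τ * lam ^ R)⁻¹ := by
      have := hτ.1
      have : (0:ℝ) < lam ^ R := Real.rpow_pos_of_pos hlam.1 _
      positivity
    have hexp : R / (R - q2) ≥ R / (R - q1) := by
      apply div_le_div_of_nonneg_left (by linarith) (by linarith) (by linarith)
    have := Real.rpow_le_rpow_of_exponent_ge hc0 hc1.le hexp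
    nlinarith
  · have h0 : Phi lam τ R q2 = 0 := by unfold Phi; rw [if_neg h2]
    rw [h0]
    exact Phi_nonneg hlam hτ R q1

lemma Phi_Hc_q {R pm pp : ℝ} (hR1 : 1 < R) :
    ∀ α, pm ≤ α → α ≤ pp → ∀ a, 0 < a → a < Phi lam τ R α →
      ∃ b, α < b ∧ ∀ r, pm ≤ r → r < b → a < Phi lam τ R r := by
  intro α hα1 hα2 a ha0 haφ
  have hαR : α < R := by
    by_contra hc
    push_neg at hc
    have : Phi lam τ R α = 0 := by unfold Phi; rw [if_neg (not_lt.2 hc)]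
    rw [this] at haφ
    linarith
  obtain ⟨hc0, hc1⟩ := c_mem hlam hτ hR1
  set c := τ * lam ^ (R - 1) with hcdef
  have hκ0 : (0:ℝ) < (τ * lam ^ R)⁻¹ := by
    have h1 := hτ.1
    have h2 : (0:ℝ) < lam ^ R := Real.rpow_pos_of_pos hlam.1 _
    positivity
  set κ := (τ * lam ^ R)⁻¹ with hκdef
  set M := Real.logb c (a / κ) with hMdef
  have hlog : c ^ M = a / κ := Real.rpow_logb hc0 hc1.ne (div_pos ha0 hκ0)
  have hiff : ∀ e : ℝ, a < κ * c ^ e ↔ e < M := by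
    intro e
    constructor
    · intro hh
      refine (Real.rpow_lt_rpow_left_iff_of_base_lt_one hc0 hc1).1 ?_
      rw [hlog, div_lt_iff₀ hκ0]
      linarith [mul_comm κ (c ^ e)]
    · intro hh
      have h' : c ^ M < c ^ e := (Real.rpow_lt_rpow_left_iff_of_base_lt_one hc0 hc1).2 hh
      rw [hlog, div_lt_iff₀ hκ0] at h'
      linarith [mul_comm (c ^ e) κ]
  have hR0 : (0:ℝ) < R := by linarith
  have hRα0 : (0:ℝ) < R - α := by linarith
  have hαM : R / (R - α) < M := by
    rw [← hiff, ← Phi_eq2 hlam hτ hR1 hαR]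
    exact haφ
  have hM0 : (0:ℝ) < M := lt_trans (div_pos hR0 hRα0) hαM
  have hkey : R / M < R - α := by
    rw [div_lt_iff₀ hM0]
    rw [div_lt_iff₀ hRα0] at hαM
    nlinarith
  refine ⟨R - R / M, by linarith, ?_⟩
  intro r hrpm hrb
  have hRMpos : (0:ℝ) < R / M := by positivity
  have hrR : r < R := by linarith
  rw [Phi_eq2 hlam hτ hR1 hrR, hiff]
  have hRr0 : (0:ℝ) < R - r := by linarith
  rw [div_lt_iff₀ hRr0]
  have h1 : R / M < R - r := by linarith
  rw [div_lt_iff₀ hM0] at h1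
  nlinarith

end PhiLemmas

section ConjLemmas

lemma conj_pos {x : ℝ} (hx : 1 < x) : 0 < conjExp x := by
  unfold conjExp
  apply div_pos <;> linarith

lemma conj_anti {x y : ℝ} (hx : 1 < x) (hxy : x ≤ y) : conjExp y ≤ conjExp x := by
  unfold conjExp
  rw [div_le_div_iff₀ (by linarith) (by linarith)]
  nlinarith

lemma conj_Hc {pm pp : ℝ} (hpm : 1 < pm) :
    ∀ α, pm ≤ α → α ≤ pp → ∀ a, 0 < a → a < conjExp α →
      ∃ b, α < b ∧ ∀ r, pm ≤ r → r < b → a < conjExp r := by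
  intro α hα1 hα2 a ha0 haφ
  have hα : 1 < α := lt_of_lt_of_le hpm hα1
  by_cases ha1 : a ≤ 1
  · refine ⟨α + 1, by linarith, fun r hr _ => ?_⟩
    have h1 : 1 < r := lt_of_lt_of_le hpm hr
    have : 1 < conjExp r := by
      unfold conjExp
      rw [lt_div_iff₀ (by linarith)]
      linarith
    linarith
  · push_neg at ha1
    have hkey : α < a / (a - 1) := by
      unfold conjExp at haφ
      rw [lt_div_iff₀ (by linarith)]
      rw [lt_div_iff₀ (by linarith)] at haφ
      nlinarith
    refine ⟨(α + a / (a - 1)) / 2, by linarith, fun r hr hrb => ?_⟩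
    have h1 : 1 < r := lt_of_lt_of_le hpm hr
    have hra : r < a / (a - 1) := by linarith
    rw [lt_div_iff₀ (by linarith)] at hra
    unfold conjExp
    rw [lt_div_iff₀ (by linarith)]
    nlinarith

lemma conj_ratio {R S : ℝ} (hS : 1 < S) (hSR : S < R) :
    conjExp R / (conjExp S - conjExp R) = R * (S - 1) / (R - S) := by
  unfold conjExp
  have h1 : S - 1 ≠ 0 := by linarith
  have h2 : R - 1 ≠ 0 := by linarith
  have h3 : R - S ≠ 0 := by linarith
  have hd : S / (S - 1) - R / (R - 1) = (R - S) / ((S - 1) * (R - 1)) := by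
    field_simp
    ring
  rw [hd, div_div_eq_mul_div, div_mul_eq_mul_div, div_div]
  rw [div_eq_div_iff (by positivity) (by positivity)]
  ring

end ConjLemmas

lemma Phi_val {lam τ R S : ℝ} (hlam : lam ∈ Ioo (0:ℝ) 1) (hτ : τ ∈ Ioo (0:ℝ) 1)
    (hSR : S < R) :
    Phi lam τ R S = τ ^ (S / (R - S)) * lam ^ (R * (S - 1) / (R - S)) := by
  unfold Phi
  rw [if_pos hSR]
  have hτ0 := hτ.1
  have hlam0 := hlam.1
  have h3 : R - S ≠ 0 := by linarith
  rw [Real.mul_rpow (by positivity) (by positivity),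
      ← Real.rpow_mul hτ0.le, ← Real.rpow_mul hlam0.le]
  congr 1
  · congr 1
    field_simp
  · congr 1
    field_simp

lemma cube_meas (n : ℕ) (a0 : Fin n → ℝ) (h : ℝ) : MeasurableSet (cube n a0 h) :=
  MeasurableSet.univ_pi fun _ => measurableSet_Ioo

lemma cube_vol (n : ℕ) (a0 : Fin n → ℝ) {h : ℝ} (hh : 0 < h) :
    volume (cube n a0 h) = ENNReal.ofReal (h ^ n) := by
  rw [cube, volume_pi_pi]
  simp only [Real.volume_Ioo, add_sub_cancel_left]
  rw [Finset.prod_const, ENNReal.ofReal_pow hh.le]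
  simp

set_option maxHeartbeats 2000000 in
theorem stmt_18 {n : ℕ} (p : (Fin n → ℝ) → ℝ) (hpmeas : Measurable p)
    (pm pp : ℝ) (hpm : 1 < pm) (hbounds : ∀ x, pm ≤ p x ∧ p x ≤ pp)
    (a0 : Fin n → ℝ) (h : ℝ) (hh : 0 < h)
    (lam τ : ℝ) (hlam : lam ∈ Ioo (0:ℝ) 1) (hτ : τ ∈ Ioo (0:ℝ) 1)
    (F : (Fin n → ℝ) × (Fin n → ℝ) → ℝ)
    (hF : F = fun z => if p z.2 < p z.1 then
        (τ ^ (p z.2) * lam ^ (p z.1 * (p z.2 - 1))) ^ (1 / (p z.1 - p z.2))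
      else 0) :
    ∀ᵐ t ∂(volume.restrict (Ioo (0:ℝ) 1)),
      ∀ᵐ s ∂(volume.restrict (Ioo (0:ℝ) 1)),
        (t + s < 1 →
          rearr2On (cube n a0 h) (cube n a0 h) F (t * h ^ n) (s * h ^ n) =
            if rearrOn (cube n a0 h) p (t * h ^ n) =
                rearrOn (cube n a0 h) p ((1 - s) * h ^ n) then 0
            else τ ^ (Psi (cube n a0 h) p (h ^ n) t s) *
              lam ^ (Psi (cube n a0 h) (fun x => conjExp (p x)) (h ^ n) s t)) ∧
        (1 ≤ t + s →
          rearr2On (cube n a0 h) (cube n a0 h) F (t * h ^ n) (s * h ^ n) = 0) := by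
  set Q := cube n a0 h with hQdef
  have hV : (0:ℝ) < h ^ n := pow_pos hh n
  have hvol : volume Q = ENNReal.ofReal (h ^ n) := cube_vol n a0 hh
  have hE : MeasurableSet Q := cube_meas n a0 h
  have hpm0 : (0:ℝ) < pm := lt_trans one_pos hpm
  have hle : pm ≤ pp := le_trans (hbounds (fun _ => 0)).1 (hbounds (fun _ => 0)).2
  set B := {s ∈ Ioo (0:ℝ) 1 | incRe Q p (s * h ^ n) ≠ rearrOn Q p ((1 - s) * h ^ n)}
    with hBdef
  have hcnt : B.Countable :=
    reflect_countable hbounds hpm0 hle hE hpmeas hV hvol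
  have hBs0 : volume B = 0 := hcnt.measure_zero _
  set Bt := (fun t : ℝ => 1 - t) ⁻¹' B with hBtdef
  have hBt0 : volume Bt = 0 := by
    refine (Set.Countable.measure_zero ?_ _)
    exact hcnt.preimage (fun a b hab => by
      have hab' : 1 - a = 1 - b := hab
      linarith)
  have haeS : ∀ᵐ s ∂(volume.restrict (Ioo (0:ℝ) 1)), s ∈ Ioo (0:ℝ) 1 ∧ s ∉ B := by
    filter_upwards [ae_restrict_mem measurableSet_Ioo,
      ae_restrict_of_ae (measure_eq_zero_iff_ae_notMem.mp hBs0)] with s h1 h2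
    exact ⟨h1, h2⟩
  have haeT : ∀ᵐ t ∂(volume.restrict (Ioo (0:ℝ) 1)), t ∈ Ioo (0:ℝ) 1 ∧ t ∉ Bt := by
    filter_upwards [ae_restrict_mem measurableSet_Ioo,
      ae_restrict_of_ae (measure_eq_zero_iff_ae_notMem.mp hBt0)] with t h1 h2
    exact ⟨h1, h2⟩
  filter_upwards [haeT] with t ⟨htI, htB⟩
  filter_upwards [haeS] with s ⟨hsI, hsB⟩
  obtain ⟨ht0, ht1⟩ := htI
  obtain ⟨hs0, hs1⟩ := hsI
  have htV0 : (0:ℝ) < t * h ^ n := by positivity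
  have htVE : ENNReal.ofReal (t * h ^ n) < volume Q := by
    rw [hvol]; exact (ENNReal.ofReal_lt_ofReal_iff hV).2 (by nlinarith)
  have hsV0 : (0:ℝ) < s * h ^ n := by positivity
  have hsVE : ENNReal.ofReal (s * h ^ n) < volume Q := by
    rw [hvol]; exact (ENNReal.ofReal_lt_ofReal_iff hV).2 (by nlinarith)
  have h1sV0 : (0:ℝ) < (1 - s) * h ^ n := by nlinarith
  have h1sVE : ENNReal.ofReal ((1 - s) * h ^ n) < volume Q := by
    rw [hvol]; exact (ENNReal.ofReal_lt_ofReal_iff hV).2 (by nlinarith)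
  have h1tV0 : (0:ℝ) < (1 - t) * h ^ n := by nlinarith
  have h1tVE : ENNReal.ofReal ((1 - t) * h ^ n) < volume Q := by
    rw [hvol]; exact (ENNReal.ofReal_lt_ofReal_iff hV).2 (by nlinarith)
  have hrefl_s : incRe Q p (s * h ^ n) = rearrOn Q p ((1 - s) * h ^ n) := by
    by_contra hne
    exact hsB ⟨⟨hs0, hs1⟩, hne⟩
  have hrefl_t : incRe Q p ((1 - t) * h ^ n) = rearrOn Q p (t * h ^ n) := by
    by_contra hne
    refine htB ?_
    show (1 - t) ∈ B
    refine ⟨⟨by linarith, by linarith⟩, ?_⟩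
    have e : 1 - (1 - t) = t := by ring
    rw [e]
    exact hne
  have hq1 : ∀ y : Fin n → ℝ, 1 < p y := fun y => lt_of_lt_of_le hpm (hbounds y).1
  set R := rearrOn Q p (t * h ^ n) with hRdef
  set S := rearrOn Q p ((1 - s) * h ^ n) with hSdef
  have hRmem : R ∈ Icc pm pp := rearr_mem_Icc hbounds hpm0 hle htVE
  have hSmem : S ∈ Icc pm pp := rearr_mem_Icc hbounds hpm0 hle h1sVE
  have hR1 : 1 < R := lt_of_lt_of_le hpm hRmem.1
  have hS1 : 1 < S := lt_of_lt_of_le hpm hSmem.1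
  have hinner : ∀ y : Fin n → ℝ,
      rearrOn Q (fun x => F (x, y)) (t * h ^ n) = Phi lam τ R (p y) := by
    intro y
    have hFeq : (fun x => F (x, y)) = fun x => (fun r => Phi lam τ r (p y)) (p x) := by
      funext x
      rw [hF]
      simp only [Phi]
    rw [hFeq]
    exact rearrOn_comp_mono hbounds hpm0 hle htV0 htVE _
      (fun r _ _ => Phi_nonneg hlam hτ r (p y))
      (fun r1 r2 _ h12 _ => Phi_mono_r hlam hτ (hq1 y) h12)
      (fun β hβ1 hβ2 => Phi_Hc_r hlam hτ (hq1 y) β (by linarith) hβ2)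
  have houter : rearr2On Q Q F (t * h ^ n) (s * h ^ n) = Phi lam τ R S := by
    unfold rearr2On
    rw [funext hinner]
    rw [rearrOn_comp_anti hbounds hpm0 hle hsV0 hsVE _
      (fun r h1 _ => Phi_nonneg hlam hτ R r)
      (Phi_anti_q hlam hτ hR1 hpm)
      (Phi_Hc_q hlam hτ hR1), hrefl_s]
  constructor
  · intro hts
    have hSR : S ≤ R := rearr_anti hbounds hpm0 hle (by nlinarith : t * h ^ n ≤ (1 - s) * h ^ n)
    by_cases heq : R = S
    · rw [if_pos heq, houter, heq]
      unfold Phi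
      rw [if_neg (lt_irrefl S)]
    · rw [if_neg heq]
      have hSltR : S < R := lt_of_le_of_ne hSR (fun e => heq e.symm)
      have hc1 : rearrOn Q (fun x => conjExp (p x)) ((1 - t) * h ^ n) = conjExp R := by
        rw [rearrOn_comp_anti hbounds hpm0 hle h1tV0 h1tVE conjExp
          (fun r h1 _ => (conj_pos (lt_of_lt_of_le hpm h1)).le)
          (fun r1 r2 h1 h12 _ => conj_anti (lt_of_lt_of_le hpm h1) h12)
          (conj_Hc hpm), hrefl_t]
      have hc2 : rearrOn Q (fun x => conjExp (p x)) (s * h ^ n) = conjExp S := by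
        rw [rearrOn_comp_anti hbounds hpm0 hle hsV0 hsVE conjExp
          (fun r h1 _ => (conj_pos (lt_of_lt_of_le hpm h1)).le)
          (fun r1 r2 h1 h12 _ => conj_anti (lt_of_lt_of_le hpm h1) h12)
          (conj_Hc hpm), hrefl_s]
      have hPsi1 : Psi Q p (h ^ n) t s = S / (R - S) := by
        unfold Psi
        rw [← hRdef, ← hSdef]
      have hPsi2 : Psi Q (fun x => conjExp (p x)) (h ^ n) s t = R * (S - 1) / (R - S) := by
        unfold Psi
        rw [hc1, hc2, conj_ratio hS1 hSltR]
      rw [houter, Phi_val hlam hτ hSltR, hPsi1, hPsi2]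
  · intro hts
    have hRS : R ≤ S := rearr_anti hbounds hpm0 hle (by nlinarith : (1 - s) * h ^ n ≤ t * h ^ n)
    rw [houter]
    unfold Phi
    rw [if_neg (not_lt.2 hRS)]
end
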